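/- arXiv:1502.03316 — 9 statements merged into one kernel-verified Lean document; each statement's English description precedes it below -/
import Mathlib

section
/- Let F be a nonempty finite set of edges of a finite simple graph on vertex set {1,...,n}, with points x_e = e_i + e_j ∈ ℝ^n for each edge e = {i,j} ∈ F. Then for every point c ∈ ℝ^n, the total squared distance of the points of F to c is at least Cost(F): ∑_{e∈F} ‖x_e − c‖² ≥ ∑_u d_F(u)·(1 − d_F(u)/m_F), where m_F = |F| and d_F(u) is the degree of u in F. -/
/-- The point `x_e = e_i + e_j ∈ ℝ^n` associated to the edge `e = {i,j}`. -/
noncomputable def edgePoint {n : ℕ} (e : Sym2 (Fin n)) : EuclideanSpace ℝ (Fin n) :=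
  Sym2.lift ⟨fun i j => EuclideanSpace.single i (1 : ℝ) + EuclideanSpace.single j 1,
    fun _ _ => add_comm _ _⟩ e

/-- The degree of a vertex `u` with respect to a finite set `F` of edges. -/
def degIn {V : Type*} [DecidableEq V] (F : Finset (Sym2 V)) (u : V) : ℕ :=
  (F.filter (fun e => u ∈ e)).card

lemma edgePoint_apply {n : ℕ} (e : Sym2 (Fin n)) (he : ¬ e.IsDiag) (u : Fin n) :
    edgePoint e u = if u ∈ e then 1 else 0 := by
  induction e using Sym2.inductionOn with
  | hf i j =>
    rw [Sym2.mk_isDiag_iff] at he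
    have : edgePoint s(i, j) u =
        EuclideanSpace.single i (1 : ℝ) u + EuclideanSpace.single j (1 : ℝ) u := rfl
    rw [this, EuclideanSpace.single_apply, EuclideanSpace.single_apply]
    by_cases hui : u = i <;> by_cases huj : u = j <;> simp_all [Sym2.mem_iff]

/-- For a nonempty finite set `F` of edges of a simple graph on `{1,…,n}` and any point
`c ∈ ℝ^n`, the total squared distance of the points `x_e`, `e ∈ F`, to `c` is at least
`Cost(F) = ∑_u d_F(u)·(1 − d_F(u)/m_F)`. -/
theorem sum_sq_dist_to_point_ge_cost {n : ℕ} (F : Finset (Sym2 (Fin n)))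
    (hF : F.Nonempty) (hsimple : ∀ e ∈ F, ¬ e.IsDiag) (c : EuclideanSpace ℝ (Fin n)) :
    ∑ e ∈ F, ‖edgePoint e - c‖ ^ 2 ≥
      ∑ u : Fin n, (degIn F u : ℝ) * (1 - (degIn F u : ℝ) / (F.card : ℝ)) := by
  have hm : (0 : ℝ) < (F.card : ℝ) := by exact_mod_cast Finset.card_pos.mpr hF
  have key : ∀ e ∈ F, ‖edgePoint e - c‖ ^ 2 =
      ∑ u : Fin n, ((if u ∈ e then (1 : ℝ) else 0) - c u) ^ 2 := by
    intro e he
    rw [EuclideanSpace.norm_eq, Real.sq_sqrt (by positivity)]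
    refine Finset.sum_congr rfl fun u _ => ?_
    rw [Real.norm_eq_abs, sq_abs]
    have : (edgePoint e - c) u = edgePoint e u - c u := rfl
    rw [this, edgePoint_apply e (hsimple e he) u]
  calc ∑ e ∈ F, ‖edgePoint e - c‖ ^ 2
      = ∑ e ∈ F, ∑ u : Fin n, ((if u ∈ e then (1 : ℝ) else 0) - c u) ^ 2 :=
        Finset.sum_congr rfl key
    _ = ∑ u : Fin n, ∑ e ∈ F, ((if u ∈ e then (1 : ℝ) else 0) - c u) ^ 2 :=
        Finset.sum_comm
    _ ≥ ∑ u : Fin n, (degIn F u : ℝ) * (1 - (degIn F u : ℝ) / (F.card : ℝ)) := by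
        refine Finset.sum_le_sum fun u _ => ?_
        have hsplit : ∑ e ∈ F, ((if u ∈ e then (1 : ℝ) else 0) - c u) ^ 2
            = (degIn F u : ℝ) * (1 - c u) ^ 2
              + ((F.card : ℝ) - (degIn F u : ℝ)) * (c u) ^ 2 := by
          rw [← Finset.sum_filter_add_sum_filter_not F (fun e => u ∈ e)]
          have h1 : ∑ e ∈ F.filter (fun e => u ∈ e),
              ((if u ∈ e then (1 : ℝ) else 0) - c u) ^ 2
              = (degIn F u : ℝ) * (1 - c u) ^ 2 := by
            rw [Finset.sum_congr rfl (fun e he => ?_), Finset.sum_const, degIn,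
              nsmul_eq_mul]
            rw [Finset.mem_filter] at he
            rw [if_pos he.2]
          have h2 : ∑ e ∈ F.filter (fun e => ¬ u ∈ e),
              ((if u ∈ e then (1 : ℝ) else 0) - c u) ^ 2
              = ((F.card : ℝ) - (degIn F u : ℝ)) * (c u) ^ 2 := by
            rw [Finset.sum_congr rfl (fun e he => ?_), Finset.sum_const, nsmul_eq_mul]
            · congr 1
              have := Finset.card_filter_add_card_filter_not
                (s := F) (p := fun e => u ∈ e)
              have hc : ((F.filter (fun e => ¬ u ∈ e)).card : ℝ)
                  = (F.card : ℝ) - (degIn F u : ℝ) := by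
                rw [degIn]
                have : (F.filter (fun e => u ∈ e)).card
                    + (F.filter (fun e => ¬ u ∈ e)).card = F.card := this
                push_cast [← this]
                ring
              exact hc
            · rw [Finset.mem_filter] at he
              rw [if_neg he.2]
              ring
          rw [h1, h2]
        rw [hsplit]
        have hd : (degIn F u : ℝ) ≤ (F.card : ℝ) := by
          exact_mod_cast Finset.card_filter_le F _
        have hd0 : (0 : ℝ) ≤ (degIn F u : ℝ) := Nat.cast_nonneg _
        have heq : (degIn F u : ℝ) * (1 - (degIn F u : ℝ) / (F.card : ℝ))
            = ((degIn F u : ℝ) * (F.card : ℝ) - (degIn F u : ℝ) ^ 2) / (F.card : ℝ) := by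
          field_simp
        rw [heq, div_le_iff₀ hm]
        nlinarith [sq_nonneg ((F.card : ℝ) * c u - (degIn F u : ℝ))]
end

section
/- Let G = (V,E) be a finite simple graph on vertex set {1,...,n} with m edges, and suppose the minimum vertex cover of G has size k ≥ 1. Then the edge set E can be partitioned into exactly k nonempty parts F_1, ..., F_k, each of which is a star (all edges of the part share a common vertex), such that the total k-means cost of the corresponding clustering of the points {x_e : e ∈ E}, with each cluster connected to its centroid, is exactly m − k; in particular ∑_{i=1}^k ∑_{e∈F_i} ‖x_e − μ_i‖² = m − k, where μ_i is the centroid of {x_e : e ∈ F_i}. -/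
/-- `S` is a vertex cover of the simple graph `G`: every edge has an endpoint in `S`. -/
def IsVertexCover {V : Type*} (G : SimpleGraph V) (S : Finset V) : Prop :=
  ∀ ⦃u v : V⦄, G.Adj u v → u ∈ S ∨ v ∈ S

lemma variance_aux {E : Type*} [NormedAddCommGroup E] [InnerProductSpace ℝ E]
    {α : Type*} (F : Finset α) (hF : F.Nonempty) (x : α → E) :
    ∑ e ∈ F, ‖x e - (F.card : ℝ)⁻¹ • ∑ e' ∈ F, x e'‖ ^ 2
      = (∑ e ∈ F, ‖x e‖ ^ 2) - (F.card : ℝ)⁻¹ * ‖∑ e' ∈ F, x e'‖ ^ 2 := by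
  have hc : (F.card : ℝ) ≠ 0 := by
    exact_mod_cast Finset.card_ne_zero.2 hF
  set s := ∑ e' ∈ F, x e' with hs
  have h1 : ∑ e ∈ F, (inner ℝ (x e) ((F.card : ℝ)⁻¹ • s) : ℝ)
      = (F.card : ℝ)⁻¹ * ‖s‖ ^ 2 := by
    rw [← sum_inner, ← hs, real_inner_smul_right, real_inner_self_eq_norm_sq]
  have h2 : ‖(F.card : ℝ)⁻¹ • s‖ ^ 2 = (F.card : ℝ)⁻¹ ^ 2 * ‖s‖ ^ 2 := by
    rw [norm_smul, mul_pow, norm_inv, Real.norm_natCast]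
  calc ∑ e ∈ F, ‖x e - (F.card : ℝ)⁻¹ • s‖ ^ 2
      = ∑ e ∈ F, (‖x e‖ ^ 2 - 2 * (inner ℝ (x e) ((F.card : ℝ)⁻¹ • s) : ℝ)
          + ‖(F.card : ℝ)⁻¹ • s‖ ^ 2) := by
        refine Finset.sum_congr rfl fun e _ => ?_
        rw [norm_sub_sq_real]
    _ = (∑ e ∈ F, ‖x e‖ ^ 2) - 2 * ((F.card : ℝ)⁻¹ * ‖s‖ ^ 2)
          + F.card * ((F.card : ℝ)⁻¹ ^ 2 * ‖s‖ ^ 2) := by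
        rw [Finset.sum_add_distrib, Finset.sum_sub_distrib, Finset.sum_const,
          nsmul_eq_mul, ← Finset.mul_sum, h1, h2]
    _ = (∑ e ∈ F, ‖x e‖ ^ 2) - (F.card : ℝ)⁻¹ * ‖s‖ ^ 2 := by
        field_simp
        ring

lemma star_cost {n : ℕ} (F : Finset (Sym2 (Fin n))) (hF : F.Nonempty) (v : Fin n)
    (g : Sym2 (Fin n) → Fin n) (hg : Set.InjOn g F) (hgv : ∀ e ∈ F, g e ≠ v)
    (hx : ∀ e ∈ F, edgePoint e
      = EuclideanSpace.single v 1 + EuclideanSpace.single (g e) 1) :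
    ∑ e ∈ F, ‖edgePoint e - (F.card : ℝ)⁻¹ • ∑ e' ∈ F, edgePoint e'‖ ^ 2
      = (F.card : ℝ) - 1 := by
  have hc : (F.card : ℝ) ≠ 0 := by
    exact_mod_cast Finset.card_ne_zero.2 hF
  have hsingle : ∀ a b : Fin n,
      (inner ℝ (EuclideanSpace.single a (1 : ℝ)) (EuclideanSpace.single b (1 : ℝ)) : ℝ)
        = if a = b then 1 else 0 := by
    intro a b
    rw [EuclideanSpace.inner_single_left]
    simp [EuclideanSpace.single_apply, eq_comm]
  have hinner : ∀ e ∈ F, ∀ e' ∈ F,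
      (inner ℝ (edgePoint e) (edgePoint e') : ℝ) = 1 + if e = e' then 1 else 0 := by
    intro e he e' he'
    rw [hx e he, hx e' he', inner_add_left, inner_add_right, inner_add_right,
      hsingle, hsingle, hsingle, hsingle]
    have h1 : v ≠ g e' := fun h => hgv e' he' h.symm
    have h2 : g e ≠ v := hgv e he
    have h3 : (g e = g e') = (e = e') := by
      by_cases h : e = e'
      · simp [h]
      · simp only [eq_iff_iff, iff_false, h]
        exact fun hgg => h (hg he he' hgg)
    simp [h1, h2, h3]
  have hnorm2 : ∀ e ∈ F, ‖edgePoint e‖ ^ 2 = 2 := by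
    intro e he
    rw [← real_inner_self_eq_norm_sq, hinner e he e he]
    norm_num
  have hsum2 : ‖∑ e' ∈ F, edgePoint e'‖ ^ 2 = (F.card : ℝ) ^ 2 + F.card := by
    rw [← real_inner_self_eq_norm_sq, sum_inner]
    have : ∀ e ∈ F, (inner ℝ (edgePoint e) (∑ e' ∈ F, edgePoint e') : ℝ)
        = (F.card : ℝ) + 1 := by
      intro e he
      rw [inner_sum]
      rw [Finset.sum_congr rfl (fun e' he' => hinner e he e' he')]
      rw [Finset.sum_add_distrib, Finset.sum_const, Finset.sum_ite_eq F e (fun _ => (1:ℝ))]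
      simp [he]
    rw [Finset.sum_congr rfl this, Finset.sum_const, nsmul_eq_mul]
    ring
  rw [variance_aux F hF, Finset.sum_congr rfl hnorm2, Finset.sum_const, hsum2,
    nsmul_eq_mul]
  field_simp
  ring

/-- If the minimum vertex cover of a simple graph `G` on `{1,…,n}` with `m` edges has size
`k ≥ 1`, then the edge set can be partitioned into `k` nonempty parts, each a star, such that
the total k-means cost of the corresponding clustering of the points `x_e` (each cluster
connected to its centroid) is exactly `m − k`. -/
theorem exists_star_partition_cost_eq {n : ℕ} (G : SimpleGraph (Fin n))
    [DecidableRel G.Adj] (k : ℕ) (hk : 1 ≤ k)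
    (S : Finset (Fin n)) (hS : IsVertexCover G S) (hcard : S.card = k)
    (hmin : ∀ T : Finset (Fin n), IsVertexCover G T → k ≤ T.card) :
    ∃ P : Fin k → Finset (Sym2 (Fin n)),
      (∀ i, (P i).Nonempty) ∧
      (∀ i j, i ≠ j → Disjoint (P i) (P j)) ∧
      (∀ e, e ∈ G.edgeFinset ↔ ∃ i, e ∈ P i) ∧
      (∀ i, ∃ v : Fin n, ∀ e ∈ P i, v ∈ e) ∧
      ∑ i : Fin k, ∑ e ∈ P i,
          ‖edgePoint e - ((P i).card : ℝ)⁻¹ • ∑ e' ∈ P i, edgePoint e'‖ ^ 2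
        = (G.edgeFinset.card : ℝ) - k := by
  classical
  have hSne : S.Nonempty := Finset.card_pos.1 (by omega)
  obtain ⟨v₀, hv₀⟩ := hSne
  let σ : Fin k ≃ {x // x ∈ S} := (Finset.equivFinOfCardEq hcard).symm
  let f : Sym2 (Fin n) → Fin n := fun e =>
    if h : ∃ w, w ∈ S ∧ w ∈ e then h.choose else v₀
  have hfS : ∀ e ∈ G.edgeFinset, f e ∈ S ∧ f e ∈ e := by
    intro e he
    have hex : ∃ w, w ∈ S ∧ w ∈ e := by
      induction e using Sym2.ind with
      | _ a b =>
        rw [SimpleGraph.mem_edgeFinset, SimpleGraph.mem_edgeSet] at he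
        rcases hS he with h | h
        exacts [⟨a, h, by simp⟩, ⟨b, h, by simp⟩]
    simp only [f, dif_pos hex]
    exact hex.choose_spec
  set P : Fin k → Finset (Sym2 (Fin n)) :=
    fun i => G.edgeFinset.filter (fun e => f e = (σ i : Fin n)) with hPdef
  -- nonempty
  have hne : ∀ i, (P i).Nonempty := by
    intro i
    set v : Fin n := (σ i : Fin n) with hv
    have hvS : v ∈ S := (σ i).2
    have hnc : ¬ IsVertexCover G (S.erase v) := by
      intro hcov
      have := hmin _ hcov
      have := Finset.card_erase_of_mem hvS
      omega
    simp only [IsVertexCover, not_forall] at hnc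
    obtain ⟨a, b, hab, hnab⟩ := hnc
    push_neg at hnab
    obtain ⟨ha, hb⟩ := hnab
    have key : ∀ w ∈ S, w ∈ s(a, b) → w = v := by
      intro w hwS hw
      rw [Sym2.mem_iff] at hw
      rcases hw with rfl | rfl
      · by_contra h; exact ha (Finset.mem_erase.2 ⟨h, hwS⟩)
      · by_contra h; exact hb (Finset.mem_erase.2 ⟨h, hwS⟩)
    have he : s(a, b) ∈ G.edgeFinset := by
      rw [SimpleGraph.mem_edgeFinset, SimpleGraph.mem_edgeSet]; exact hab
    refine ⟨s(a, b), Finset.mem_filter.2 ⟨he, ?_⟩⟩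
    obtain ⟨h1, h2⟩ := hfS _ he
    exact key _ h1 h2
  -- disjoint
  have hdisj : ∀ i j, i ≠ j → Disjoint (P i) (P j) := by
    intro i j hij
    rw [Finset.disjoint_left]
    intro e hei hej
    rw [hPdef] at hei hej
    have h1 := (Finset.mem_filter.1 hei).2
    have h2 := (Finset.mem_filter.1 hej).2
    have : σ i = σ j := Subtype.ext (h1 ▸ h2 ▸ rfl)
    exact hij (σ.injective this)
  -- cover
  have hcov : ∀ e, e ∈ G.edgeFinset ↔ ∃ i, e ∈ P i := by
    intro e
    constructor
    · intro he
      obtain ⟨h1, _⟩ := hfS e he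
      refine ⟨σ.symm ⟨f e, h1⟩, Finset.mem_filter.2 ⟨he, ?_⟩⟩
      simp
    · rintro ⟨i, hi⟩
      exact (Finset.mem_filter.1 hi).1
  -- star
  have hstar : ∀ i, ∀ e ∈ P i, (σ i : Fin n) ∈ e := by
    intro i e he
    obtain ⟨h1, h2⟩ := Finset.mem_filter.1 he
    have := (hfS e h1).2
    rwa [h2] at this
  refine ⟨P, hne, hdisj, hcov, fun i => ⟨σ i, hstar i⟩, ?_⟩
  -- the cost computation
  have hcost : ∀ i, ∑ e ∈ P i,
      ‖edgePoint e - ((P i).card : ℝ)⁻¹ • ∑ e' ∈ P i, edgePoint e'‖ ^ 2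
        = ((P i).card : ℝ) - 1 := by
    intro i
    set v : Fin n := (σ i : Fin n) with hv
    set g : Sym2 (Fin n) → Fin n := fun e =>
      if h : v ∈ e then Sym2.Mem.other' h else v₀ with hgdef
    have hge : ∀ e ∈ P i, s(v, g e) = e := by
      intro e he
      have hm : v ∈ e := hstar i e he
      simp only [hgdef, dif_pos hm]
      exact Sym2.other_spec' hm
    have hadj : ∀ e ∈ P i, G.Adj v (g e) := by
      intro e he
      have h1 := (Finset.mem_filter.1 he).1
      rw [SimpleGraph.mem_edgeFinset] at h1
      rw [← hge e he] at h1
      exact h1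
    refine star_cost (P i) (hne i) v g ?_ ?_ ?_
    · intro e1 he1 e2 he2 hgg
      rw [← hge e1 he1, ← hge e2 he2, hgg]
    · intro e he
      exact fun h => (hadj e he).ne' h
    · intro e he
      conv_lhs => rw [← hge e he]
      simp [edgePoint]
  rw [Finset.sum_congr rfl (fun i _ => hcost i)]
  have hcardsum : ∑ i : Fin k, (P i).card = G.edgeFinset.card := by
    rw [← Finset.card_biUnion]
    · congr 1
      ext e
      simp [Finset.mem_biUnion, hcov e]
    · intro i _ j _ hij
      exact hdisj i j hij
  rw [Finset.sum_sub_distrib, Finset.sum_const, Finset.card_univ, Fintype.card_fin,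
    ← Nat.cast_sum, hcardsum]
  simp
end

section
/- Let G = (V,E) be a finite simple graph on vertex set {1,...,n} with m edges whose minimum vertex cover has size k ≥ 1, and for each edge e = {i,j} let x_e = e_i + e_j ∈ ℝ^n. Then there exist k center points c_1, ..., c_k ∈ ℝ^n such that ∑_{e∈E} min_{1≤i≤k} ‖x_e − c_i‖² ≤ m − k. -/
lemma inner_edgePoint {n : ℕ} (i j a b : Fin n) :
    @inner ℝ _ _ (edgePoint s(i,j)) (edgePoint s(a,b)) =
      (((if a = i then 1 else 0) + (if a = j then 1 else 0)) +
       ((if b = i then 1 else 0) + (if b = j then 1 else 0)) : ℝ) := by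
  simp [edgePoint, inner_add_left, inner_add_right, EuclideanSpace.inner_single_left,
    EuclideanSpace.single_apply]
  simp only [@eq_comm _ i a, @eq_comm _ j a, @eq_comm _ i b, @eq_comm _ j b]

lemma inner_edgePoint_pair {n : ℕ} (v : Fin n) (e e' : Sym2 (Fin n))
    (hv : v ∈ e) (hv' : v ∈ e') (hd : ¬ e.IsDiag) (hd' : ¬ e'.IsDiag) :
    @inner ℝ _ _ (edgePoint e) (edgePoint e') = if e = e' then 2 else 1 := by
  obtain ⟨a, rfl⟩ := Sym2.mem_iff_exists.mp hv
  obtain ⟨b, rfl⟩ := Sym2.mem_iff_exists.mp hv'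
  rw [Sym2.mk_isDiag_iff] at hd hd'
  rw [inner_edgePoint]
  by_cases hab : a = b
  · subst hab
    simp [Ne.symm hd, hd]
    norm_num
  · have hne : s(v,a) ≠ s(v,b) := fun h => hab (Sym2.congr_right.mp h)
    have hba : ¬ b = a := fun h => hab h.symm
    have hbv : ¬ b = v := fun h => hd' h.symm
    rw [if_neg hne, if_pos rfl, if_neg hd, if_neg hbv, if_neg hba]
    norm_num

open Finset in
lemma cluster_cost {n : ℕ} (v : Fin n) (F : Finset (Sym2 (Fin n)))
    (hF : F.Nonempty) (hmem : ∀ e ∈ F, v ∈ e) (hnd : ∀ e ∈ F, ¬ e.IsDiag) :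
    ∑ e ∈ F, ‖edgePoint e - ((F.card : ℝ)⁻¹ • ∑ e' ∈ F, edgePoint e')‖ ^ 2
      = (F.card : ℝ) - 1 := by
  set m : ℝ := (F.card : ℝ) with hm
  have hm0 : m ≠ 0 := by
    simp [hm, Finset.card_ne_zero_of_mem hF.choose_spec]
  set T : EuclideanSpace ℝ (Fin n) := ∑ e' ∈ F, edgePoint e' with hT
  have hTT : @inner ℝ _ _ T T = m * (m + 1) := by
    rw [hT, sum_inner]
    have : ∀ e ∈ F, @inner ℝ _ _ (edgePoint e) T = m + 1 := by
      intro e he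
      rw [hT, inner_sum]
      have h1 : ∀ e' ∈ F, @inner ℝ _ _ (edgePoint e) (edgePoint e')
          = if e = e' then 2 else 1 := fun e' he' =>
        inner_edgePoint_pair v e e' (hmem e he) (hmem e' he') (hnd e he) (hnd e' he')
      rw [Finset.sum_congr rfl h1]
      have h2 : ∀ x ∈ F, (if e = x then (2:ℝ) else 1) = 1 + if e = x then 1 else 0 := by
        intro x _; split <;> norm_num
      rw [Finset.sum_congr rfl h2, Finset.sum_add_distrib, Finset.sum_const,
        Finset.sum_ite_eq F e (fun _ => (1:ℝ)), if_pos he, nsmul_eq_mul, mul_one, ← hm]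
    rw [Finset.sum_congr rfl this, Finset.sum_const, nsmul_eq_mul, ← hm]
  have hxx : ∀ e ∈ F, ‖edgePoint e‖ ^ 2 = 2 := by
    intro e he
    have := inner_edgePoint_pair v e e (hmem e he) (hmem e he) (hnd e he) (hnd e he)
    rw [real_inner_self_eq_norm_sq] at this
    simpa using this
  have hexp : ∀ e ∈ F, ‖edgePoint e - (m⁻¹ • T)‖ ^ 2
      = ‖edgePoint e‖ ^ 2 - 2 * (m⁻¹ * @inner ℝ _ _ (edgePoint e) T) + m⁻¹^2 * (m * (m+1)) := by
    intro e he
    rw [norm_sub_sq_real, real_inner_smul_right, norm_smul, mul_pow, ← hTT,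
      real_inner_self_eq_norm_sq]
    simp [abs_of_nonneg, sq_abs]
  rw [Finset.sum_congr rfl hexp, Finset.sum_add_distrib, Finset.sum_sub_distrib,
    Finset.sum_congr rfl hxx]
  rw [← Finset.mul_sum, ← Finset.mul_sum, ← sum_inner, ← hT, hTT, Finset.sum_const,
    Finset.sum_const, nsmul_eq_mul, nsmul_eq_mul, ← hm]
  field_simp
  ring

open Finset in
/-- If the minimum vertex cover of a simple graph `G` on `{1,…,n}` with `m` edges has size
`k ≥ 1`, then there exist `k` centers `c_1, …, c_k ∈ ℝ^n` with k-means cost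
`∑_{e∈E} min_i ‖x_e − c_i‖² ≤ m − k`. -/
theorem exists_centers_kmeans_cost_le {n : ℕ} (G : SimpleGraph (Fin n))
    [DecidableRel G.Adj] (k : ℕ) (hk : 1 ≤ k)
    (S : Finset (Fin n)) (hS : IsVertexCover G S) (hcard : S.card = k)
    (hmin : ∀ T : Finset (Fin n), IsVertexCover G T → k ≤ T.card) :
    ∃ c : Fin k → EuclideanSpace ℝ (Fin n),
      ∑ e ∈ G.edgeFinset,
          (Finset.univ.inf' ⟨⟨0, hk⟩, Finset.mem_univ _⟩
            fun i : Fin k => ‖edgePoint e - c i‖ ^ 2)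
        ≤ (G.edgeFinset.card : ℝ) - k := by
  classical
  set ι : Fin k → Fin n := fun i => ((S.equivFin.symm (Fin.cast hcard.symm i)) : Fin n) with hι
  have hιS : ∀ i : Fin k, ι i ∈ S := fun i => (S.equivFin.symm (Fin.cast hcard.symm i)).2
  have hιinj : Function.Injective ι := by
    intro i j h
    have := Subtype.coe_injective (a₁ := S.equivFin.symm (Fin.cast hcard.symm i)) h
    have := S.equivFin.symm.injective this
    exact Fin.cast_injective _ this
  have hsurj : ∀ v ∈ S, ∃ i : Fin k, ι i = v := by
    intro v hv
    refine ⟨Fin.cast hcard (S.equivFin ⟨v, hv⟩), ?_⟩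
    simp [hι]
  -- assignment
  have hex : ∀ e ∈ G.edgeFinset, ∃ i : Fin k, ι i ∈ e := by
    intro e he
    induction e with
    | _ u w =>
      rw [SimpleGraph.mem_edgeFinset, SimpleGraph.mem_edgeSet] at he
      rcases hS he with h | h
      · obtain ⟨i, hi⟩ := hsurj u h
        exact ⟨i, by rw [hi]; exact Sym2.mem_mk_left u w⟩
      · obtain ⟨i, hi⟩ := hsurj w h
        exact ⟨i, by rw [hi]; exact Sym2.mem_mk_right u w⟩
  set g : Sym2 (Fin n) → Fin k := fun e =>
    if h : ∃ i : Fin k, ι i ∈ e then h.choose else ⟨0, hk⟩ with hg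
  have hgmem : ∀ e ∈ G.edgeFinset, ι (g e) ∈ e := by
    intro e he
    have h := hex e he
    simp only [hg, dif_pos h]
    exact h.choose_spec
  set F : Fin k → Finset (Sym2 (Fin n)) :=
    fun i => G.edgeFinset.filter (fun e => g e = i) with hF
  have hFne : ∀ i : Fin k, (F i).Nonempty := by
    intro i
    have hnc : ¬ IsVertexCover G (S.erase (ι i)) := by
      intro hcov
      have := hmin _ hcov
      have hlt : (S.erase (ι i)).card < S.card := Finset.card_erase_lt_of_mem (hιS i)
      omega
    rw [IsVertexCover] at hnc
    push_neg at hnc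
    obtain ⟨u, w, huw, hu, hw⟩ := hnc
    have hmem_e : s(u, w) ∈ G.edgeFinset := by
      rw [SimpleGraph.mem_edgeFinset, SimpleGraph.mem_edgeSet]; exact huw
    have honly : ∀ x ∈ s(u, w), x ∈ S → x = ι i := by
      intro x hx hxS
      rcases Sym2.mem_iff.mp hx with rfl | rfl
      · by_contra hne
        exact hu (Finset.mem_erase.mpr ⟨hne, hxS⟩)
      · by_contra hne
        exact hw (Finset.mem_erase.mpr ⟨hne, hxS⟩)
    refine ⟨s(u, w), Finset.mem_filter.mpr ⟨hmem_e, ?_⟩⟩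
    exact hιinj (honly _ (hgmem _ hmem_e) (hιS _))
  have hFmem : ∀ i : Fin k, ∀ e ∈ F i, ι i ∈ e := by
    intro i e he
    rw [hF, Finset.mem_filter] at he
    rw [← he.2]
    exact hgmem e he.1
  have hFnd : ∀ i : Fin k, ∀ e ∈ F i, ¬ e.IsDiag := by
    intro i e he
    rw [hF, Finset.mem_filter, SimpleGraph.mem_edgeFinset] at he
    exact G.not_isDiag_of_mem_edgeSet he.1
  set c : Fin k → EuclideanSpace ℝ (Fin n) :=
    fun i => ((F i).card : ℝ)⁻¹ • ∑ e ∈ F i, edgePoint e with hc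
  refine ⟨c, ?_⟩
  have step1 : ∑ e ∈ G.edgeFinset,
      (Finset.univ.inf' ⟨⟨0, hk⟩, Finset.mem_univ _⟩
        fun i : Fin k => ‖edgePoint e - c i‖ ^ 2)
      ≤ ∑ e ∈ G.edgeFinset, ‖edgePoint e - c (g e)‖ ^ 2 := by
    refine Finset.sum_le_sum fun e _ => ?_
    exact Finset.inf'_le _ (Finset.mem_univ _)
  have step2 : ∑ e ∈ G.edgeFinset, ‖edgePoint e - c (g e)‖ ^ 2
      = ∑ i : Fin k, ∑ e ∈ F i, ‖edgePoint e - c i‖ ^ 2 := by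
    rw [← Finset.sum_fiberwise G.edgeFinset g (fun e => ‖edgePoint e - c (g e)‖ ^ 2)]
    refine Finset.sum_congr rfl fun i _ => Finset.sum_congr rfl fun e he => ?_
    rw [Finset.mem_filter] at he
    rw [he.2]
  have step3 : ∑ i : Fin k, ∑ e ∈ F i, ‖edgePoint e - c i‖ ^ 2
      = ∑ i : Fin k, (((F i).card : ℝ) - 1) := by
    refine Finset.sum_congr rfl fun i _ => ?_
    exact cluster_cost (ι i) (F i) (hFne i) (hFmem i) (hFnd i)
  have hcards : ∑ i : Fin k, (F i).card = G.edgeFinset.card :=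
    (Finset.card_eq_sum_card_fiberwise (fun e _ => Finset.mem_univ (g e))).symm
  have step4 : ∑ i : Fin k, (((F i).card : ℝ) - 1) = (G.edgeFinset.card : ℝ) - k := by
    rw [Finset.sum_sub_distrib, Finset.sum_const, ← Nat.cast_sum, hcards]
    simp
  calc _ ≤ _ := step1
    _ = _ := step2
    _ = _ := step3
    _ = _ := step4
end

section
/- Let E' be a nonempty finite set of edges of a finite simple graph, with m_{E'} = |E'| edges and vertex degrees d_u. Then m_{E'} − 1 ≤ Cost(E') ≤ 2·m_{E'} − 1, where Cost(E') = ∑_u d_u·(1 − d_u/m_{E'}). Equivalently, 2·m_{E'} ≤ ∑_u d_u² ≤ m_{E'}·(m_{E'} + 1). -/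
lemma sum_ite_mem_sym2 {V : Type*} [Fintype V] [DecidableEq V] (a b : V) (g : V → ℕ)
    (hab : a ≠ b) : ∑ u : V, (if u ∈ s(a, b) then g u else 0) = g a + g b := by
  rw [← Finset.sum_filter]
  have : Finset.univ.filter (fun u => u ∈ s(a, b)) = {a, b} := by
    ext u; simp [Sym2.mem_iff]
  rw [this, Finset.sum_pair hab]

lemma key_swap {V : Type*} [Fintype V] [DecidableEq V] (E' : Finset (Sym2 V)) (g : V → ℕ) :
    ∑ u : V, degIn E' u * g u = ∑ e ∈ E', ∑ u : V, (if u ∈ e then g u else 0) := by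
  rw [Finset.sum_comm]
  refine Finset.sum_congr rfl fun u _ => ?_
  rw [← Finset.sum_filter, Finset.sum_const, degIn, smul_eq_mul]


/-- For a nonempty finite set `E'` of edges of a finite simple graph with `m = |E'|` edges and
degrees `d_u`, we have `m − 1 ≤ Cost(E') ≤ 2m − 1` where
`Cost(E') = ∑_u d_u·(1 − d_u/m)`; equivalently, `2m ≤ ∑_u d_u² ≤ m(m+1)`. -/
theorem cost_bounds {V : Type*} [Fintype V] [DecidableEq V]
    (E' : Finset (Sym2 V)) (hE' : E'.Nonempty) (hsimple : ∀ e ∈ E', ¬ e.IsDiag) :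
    ((E'.card : ℝ) - 1 ≤
        ∑ u : V, (degIn E' u : ℝ) * (1 - (degIn E' u : ℝ) / (E'.card : ℝ)) ∧
      ∑ u : V, (degIn E' u : ℝ) * (1 - (degIn E' u : ℝ) / (E'.card : ℝ)) ≤
        2 * (E'.card : ℝ) - 1) ∧
    (2 * E'.card ≤ ∑ u : V, (degIn E' u) ^ 2 ∧
      ∑ u : V, (degIn E' u) ^ 2 ≤ E'.card * (E'.card + 1)) := by
  set m := E'.card with hm
  -- handshake
  have hhand : ∑ u : V, degIn E' u = 2 * m := by
    have h := key_swap E' (fun _ => 1)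
    simp only [mul_one] at h
    rw [h]
    rw [Finset.sum_congr rfl (fun e he => ?_), Finset.sum_const, smul_eq_mul, mul_comm]
    · obtain ⟨a, b⟩ := e
      have hab : a ≠ b := by
        have := hsimple _ he; rwa [Sym2.mk_isDiag_iff] at this
      exact sum_ite_mem_sym2 a b (fun _ => 1) hab
  -- sum of squares
  have hsq : ∑ u : V, (degIn E' u) ^ 2 = ∑ e ∈ E', ∑ u : V, (if u ∈ e then degIn E' u else 0) := by
    rw [← key_swap E' (degIn E')]
    exact Finset.sum_congr rfl fun u _ => (sq (degIn E' u)).symm ▸ rfl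
  have hub : ∑ u : V, (degIn E' u) ^ 2 ≤ m * (m + 1) := by
    rw [hsq]
    calc ∑ e ∈ E', ∑ u : V, (if u ∈ e then degIn E' u else 0)
        ≤ ∑ _e ∈ E', (m + 1) := by
          refine Finset.sum_le_sum fun e he => ?_
          obtain ⟨a, b⟩ := e
          have hab : a ≠ b := by
            have := hsimple _ he; rwa [Sym2.mk_isDiag_iff] at this
          rw [sum_ite_mem_sym2 a b _ hab]
          -- degIn a + degIn b ≤ m + 1
          have hcui := Finset.card_union_add_card_inter
            (E'.filter (fun e => a ∈ e)) (E'.filter (fun e => b ∈ e))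
          have hu : ((E'.filter (fun e => a ∈ e)) ∪ (E'.filter (fun e => b ∈ e))).card ≤ m := by
            apply Finset.card_le_card
            intro x hx
            rcases Finset.mem_union.1 hx with h | h
            · exact (Finset.mem_filter.1 h).1
            · exact (Finset.mem_filter.1 h).1
          have hi : ((E'.filter (fun e => a ∈ e)) ∩ (E'.filter (fun e => b ∈ e))).card ≤ 1 := by
            apply Finset.card_le_one.2
            intro x hx y hy
            rcases Finset.mem_inter.1 hx with ⟨hxa, hxb⟩
            rcases Finset.mem_inter.1 hy with ⟨hya, hyb⟩
            have hx' : x = s(a, b) := (Sym2.mem_and_mem_iff hab).1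
              ⟨(Finset.mem_filter.1 hxa).2, (Finset.mem_filter.1 hxb).2⟩
            have hy' : y = s(a, b) := (Sym2.mem_and_mem_iff hab).1
              ⟨(Finset.mem_filter.1 hya).2, (Finset.mem_filter.1 hyb).2⟩
            rw [hx', hy']
          show degIn E' a + degIn E' b ≤ m + 1
          unfold degIn
          omega
      _ = m * (m + 1) := by rw [Finset.sum_const, smul_eq_mul]
  have hlb : 2 * m ≤ ∑ u : V, (degIn E' u) ^ 2 := by
    rw [← hhand]
    exact Finset.sum_le_sum fun u _ => Nat.le_self_pow two_ne_zero _
  refine ⟨?_, hlb, hub⟩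
  -- real part
  have hm1 : 1 ≤ m := Finset.card_pos.2 hE'
  have hmpos : (0 : ℝ) < (m : ℝ) := by exact_mod_cast hm1
  have hcost : ∑ u : V, (degIn E' u : ℝ) * (1 - (degIn E' u : ℝ) / (m : ℝ)) =
      2 * (m : ℝ) - (∑ u : V, (degIn E' u) ^ 2 : ℕ) / (m : ℝ) := by
    have : ∀ u : V, (degIn E' u : ℝ) * (1 - (degIn E' u : ℝ) / (m : ℝ)) =
        (degIn E' u : ℝ) - ((degIn E' u : ℝ) ^ 2) / (m : ℝ) := by
      intro u; field_simp
    rw [Finset.sum_congr rfl fun u _ => this u, Finset.sum_sub_distrib, ← Finset.sum_div]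
    push_cast
    rw [show ((∑ u : V, (degIn E' u : ℝ))) = 2 * (m : ℝ) by exact_mod_cast hhand]
  rw [hcost]
  have hubR : ((∑ u : V, (degIn E' u) ^ 2 : ℕ) : ℝ) ≤ (m : ℝ) * ((m : ℝ) + 1) := by
    exact_mod_cast hub
  have hlbR : 2 * (m : ℝ) ≤ ((∑ u : V, (degIn E' u) ^ 2 : ℕ) : ℝ) := by
    exact_mod_cast hlb
  constructor
  · have : ((∑ u : V, (degIn E' u) ^ 2 : ℕ) : ℝ) / (m : ℝ) ≤ (m : ℝ) + 1 := by
      rw [div_le_iff₀ hmpos]; nlinarith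
    linarith
  · have : 1 ≤ ((∑ u : V, (degIn E' u) ^ 2 : ℕ) : ℝ) / (m : ℝ) := by
      rw [le_div_iff₀ hmpos]; nlinarith
    linarith
end

section
/- Let G = (V,E) be a finite simple triangle-free graph with m edges, let δ ≥ 0, and suppose the edge set E is partitioned into k ≥ 1 nonempty parts F_1, ..., F_k such that ∑_{i=1}^k Cost(F_i) ≤ m − (1 − δ)·k. Then G has a vertex cover of size at most (1 + 3δ)·k. -/
set_option linter.unusedSectionVars false
set_option linter.unusedVariables false

open Finset

namespace VCaux

variable {V : Type*} [Fintype V] [DecidableEq V]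

lemma eq_mk_of_mem {e : Sym2 V} {u v : V} (hd : ¬ e.IsDiag) (hu : u ∈ e) (hv : v ∈ e)
    (huv : u ≠ v) : e = s(u, v) := by
  induction e using Sym2.ind with
  | _ a b =>
    rw [Sym2.mem_iff] at hu hv
    rcases hu with rfl | rfl <;> rcases hv with rfl | rfl
    · exact absurd rfl huv
    · rfl
    · exact Sym2.eq_swap
    · exact absurd rfl huv

lemma filter_mem_univ {a b : V} (hab : a ≠ b) :
    univ.filter (fun u => u ∈ s(a, b)) = {a, b} := by
  ext u; simp [Sym2.mem_iff]

lemma sum_degIn_mul (F : Finset (Sym2 V)) (f : V → ℕ) :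
    ∑ u, degIn F u * f u = ∑ e ∈ F, ∑ u ∈ univ.filter (fun u => u ∈ e), f u := by
  have h1 : ∀ u : V, degIn F u * f u = ∑ e ∈ F, if u ∈ e then f u else 0 := by
    intro u
    rw [← Finset.sum_filter]
    simp [degIn, Finset.sum_const, mul_comm]
  simp only [h1]
  rw [Finset.sum_comm]
  exact Finset.sum_congr rfl fun e _ => (Finset.sum_filter _ _).symm

section withG

variable {G : SimpleGraph V} [DecidableRel G.Adj] {F : Finset (Sym2 V)}

lemma proper (hFE : F ⊆ G.edgeFinset) {e : Sym2 V} (he : e ∈ F) : ¬ e.IsDiag :=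
  SimpleGraph.not_isDiag_of_mem_edgeSet G (SimpleGraph.mem_edgeFinset.1 (hFE he))

lemma adj_of_mem (hFE : F ⊆ G.edgeFinset) {u v : V} (h : s(u, v) ∈ F) : G.Adj u v :=
  (SimpleGraph.mem_edgeSet G).1 (SimpleGraph.mem_edgeFinset.1 (hFE h))

lemma exists_repr (hFE : F ⊆ G.edgeFinset) {e : Sym2 V} (he : e ∈ F) : ∃ a b : V, a ≠ b ∧ e = s(a, b) := by
  induction e using Sym2.ind with
  | _ a b =>
    refine ⟨a, b, ?_, rfl⟩
    intro h; exact proper hFE he (by simp [h])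

/-- double counting: sum of degrees is twice the number of edges -/
lemma sum_degIn (hFE : F ⊆ G.edgeFinset) : ∑ u, degIn F u = 2 * F.card := by
  have := sum_degIn_mul F (fun _ => 1)
  simp only [mul_one] at this
  rw [this]
  rw [Finset.sum_congr rfl (fun e he => ?_), Finset.sum_const, smul_eq_mul, mul_comm]
  obtain ⟨a, b, hab, rfl⟩ := exists_repr hFE he
  rw [filter_mem_univ hab, Finset.sum_pair hab]

/-- `d u + d v ≤ m + 1` for an edge `uv`. -/
lemma deg_add_le (hFE : F ⊆ G.edgeFinset) {u v : V} (huv : s(u, v) ∈ F) (hne : u ≠ v) :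
    degIn F u + degIn F v ≤ F.card + 1 := by
  set A := F.filter (fun e => u ∈ e) with hA
  set B := F.filter (fun e => v ∈ e) with hB
  have hAB : A ∩ B = {s(u, v)} := by
    ext e
    simp only [Finset.mem_inter, hA, hB, Finset.mem_filter, Finset.mem_singleton]
    constructor
    · rintro ⟨⟨heF, hu⟩, -, hv⟩
      exact eq_mk_of_mem (proper hFE heF) hu hv hne
    · rintro rfl
      exact ⟨⟨huv, Sym2.mem_mk_left u v⟩, huv, Sym2.mem_mk_right u v⟩
  have hsub : A ∪ B ⊆ F := Finset.union_subset (Finset.filter_subset _ _) (Finset.filter_subset _ _)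
  have := Finset.card_union_add_card_inter A B
  have h2 : (A ∪ B).card ≤ F.card := Finset.card_le_card hsub
  calc degIn F u + degIn F v = (A ∪ B).card + (A ∩ B).card := this.symm
    _ ≤ F.card + 1 := by rw [hAB]; simp; omega


/-- Triangle-free degree bound: for an edge `uv` and a third vertex `x`,
`d(u)+d(v)+d(x) ≤ m+2`. -/
lemma deg_triple (hFE : F ⊆ G.edgeFinset) (hG : G.CliqueFree 3) {u v x : V}
    (huv : s(u, v) ∈ F) (hne : u ≠ v) (hxu : x ≠ u) (hxv : x ≠ v) :
    degIn F u + degIn F v + degIn F x ≤ F.card + 2 := by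
  set A := F.filter (fun e => u ∈ e) with hA
  set B := F.filter (fun e => v ∈ e) with hB
  set C := F.filter (fun e => x ∈ e) with hC
  have hAB : A ∩ B = {s(u, v)} := by
    ext e
    simp only [Finset.mem_inter, hA, hB, Finset.mem_filter, Finset.mem_singleton]
    constructor
    · rintro ⟨⟨heF, hu⟩, -, hv⟩
      exact eq_mk_of_mem (proper hFE heF) hu hv hne
    · rintro rfl
      exact ⟨⟨huv, Sym2.mem_mk_left u v⟩, huv, Sym2.mem_mk_right u v⟩
  have hAC : A ∩ C ⊆ {s(u, x)} := by
    intro e he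
    simp only [Finset.mem_inter, hA, hC, Finset.mem_filter] at he
    obtain ⟨⟨heF, hu⟩, -, hx⟩ := he
    simp [eq_mk_of_mem (proper hFE heF) hu hx hxu.symm]
  have hBC : B ∩ C ⊆ {s(v, x)} := by
    intro e he
    simp only [Finset.mem_inter, hB, hC, Finset.mem_filter] at he
    obtain ⟨⟨heF, hv⟩, -, hx⟩ := he
    simp [eq_mk_of_mem (proper hFE heF) hv hx hxv.symm]
  have hnotboth : ¬ (s(u, x) ∈ F ∧ s(v, x) ∈ F) := by
    rintro ⟨h1, h2⟩
    exact hG {u, v, x} (SimpleGraph.is3Clique_triple_iff.2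
      ⟨adj_of_mem hFE huv, adj_of_mem hFE h1, adj_of_mem hFE h2⟩)
  have hdist : (A ∪ B) ∩ C = (A ∩ C) ∪ (B ∩ C) := Finset.union_inter_distrib_right ..
  have hABC1 : ((A ∪ B) ∩ C).card ≤ 1 := by
    rw [hdist]
    by_cases hux : s(u, x) ∈ F
    · have hBCe : B ∩ C = ∅ := by
        rw [Finset.eq_empty_iff_forall_notMem]
        intro e he
        have := hBC he
        simp only [Finset.mem_singleton] at this
        subst this
        simp only [Finset.mem_inter, hB, Finset.mem_filter] at he
        exact hnotboth ⟨hux, he.1.1⟩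
      rw [hBCe, Finset.union_empty]
      simpa using Finset.card_le_card hAC
    · have hACe : A ∩ C = ∅ := by
        rw [Finset.eq_empty_iff_forall_notMem]
        intro e he
        have := hAC he
        simp only [Finset.mem_singleton] at this
        subst this
        simp only [Finset.mem_inter, hA, Finset.mem_filter] at he
        exact hux he.1.1
      rw [hACe, Finset.empty_union]
      simpa using Finset.card_le_card hBC
  have hsub : (A ∪ B) ∪ C ⊆ F := by
    refine Finset.union_subset (Finset.union_subset ?_ ?_) ?_ <;> exact Finset.filter_subset _ _
  have e1 := Finset.card_union_add_card_inter A B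
  have e2 := Finset.card_union_add_card_inter (A ∪ B) C
  have h2 : ((A ∪ B) ∪ C).card ≤ F.card := Finset.card_le_card hsub
  have hABc : (A ∩ B).card = 1 := by rw [hAB]; simp
  have : degIn F u = A.card := rfl
  have : degIn F v = B.card := rfl
  have : degIn F x = C.card := rfl
  show A.card + B.card + C.card ≤ F.card + 2
  omega

/-- Triangle-free: every edge has at most one endpoint among neighbors of `x`,
so the degree sum over neighbors of `x` is at most `m`. -/
lemma sum_deg_nbr (hFE : F ⊆ G.edgeFinset) (hG : G.CliqueFree 3) (x : V) :
    ∑ u ∈ univ.filter (fun u => s(x, u) ∈ F), degIn F u ≤ F.card := by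
  set N := univ.filter (fun u => s(x, u) ∈ F) with hN
  have key : ∀ u : V, degIn F u = ∑ e ∈ F, if u ∈ e then 1 else 0 := by
    intro u; rw [← Finset.sum_filter]; simp [degIn]
  calc ∑ u ∈ N, degIn F u = ∑ u ∈ N, ∑ e ∈ F, if u ∈ e then 1 else 0 := by
        exact Finset.sum_congr rfl fun u _ => key u
    _ = ∑ e ∈ F, ∑ u ∈ N, if u ∈ e then 1 else 0 := Finset.sum_comm
    _ = ∑ e ∈ F, (N.filter (fun u => u ∈ e)).card := by
        refine Finset.sum_congr rfl fun e _ => ?_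
        rw [← Finset.sum_filter]; simp
    _ ≤ ∑ e ∈ F, 1 := by
        refine Finset.sum_le_sum fun e he => ?_
        rw [Finset.card_le_one]
        intro a ha b hb
        simp only [hN, Finset.mem_filter, Finset.mem_univ, true_and] at ha hb
        by_contra hab
        have hxa : x ≠ a := fun h => proper hFE ha.1 (by simp [h])
        have hxb : x ≠ b := fun h => proper hFE hb.1 (by simp [h])
        have heab : e = s(a, b) := eq_mk_of_mem (proper hFE he) ha.2 hb.2 hab
        exact hG {x, a, b} (SimpleGraph.is3Clique_triple_iff.2
          ⟨adj_of_mem hFE ha.1, adj_of_mem hFE hb.1, adj_of_mem hFE (heab ▸ he)⟩)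
    _ = F.card := by simp

lemma card_nbr (hFE : F ⊆ G.edgeFinset) (x : V) :
    (univ.filter (fun u => s(x, u) ∈ F)).card = degIn F x := by
  set N := univ.filter (fun u => s(x, u) ∈ F) with hN
  have hinj : Set.InjOn (fun u => s(x, u)) N := by
    intro a _ b _ hab
    exact Sym2.congr_right.1 hab
  have himg : N.image (fun u => s(x, u)) = F.filter (fun e => x ∈ e) := by
    ext e
    simp only [Finset.mem_image, Finset.mem_filter, hN, Finset.mem_univ, true_and]
    constructor
    · rintro ⟨u, hu, rfl⟩
      exact ⟨hu, Sym2.mem_mk_left x u⟩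
    · rintro ⟨heF, hx⟩
      exact ⟨Sym2.Mem.other' hx, by rw [Sym2.other_spec' hx]; exact heF, Sym2.other_spec' hx⟩
  rw [degIn, ← himg, Finset.card_image_of_injOn hinj]


lemma image_nbr (hFE : F ⊆ G.edgeFinset) (x : V) :
    (univ.filter (fun u => s(x, u) ∈ F)).image (fun u => s(x, u))
      = F.filter (fun e => x ∈ e) := by
  ext e
  simp only [Finset.mem_image, Finset.mem_filter, Finset.mem_univ, true_and]
  constructor
  · rintro ⟨u, hu, rfl⟩
    exact ⟨hu, Sym2.mem_mk_left x u⟩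
  · rintro ⟨heF, hx⟩
    exact ⟨Sym2.Mem.other' hx, by rw [Sym2.other_spec' hx]; exact heF, Sym2.other_spec' hx⟩

end withG

end VCaux

namespace VCaux

variable {V : Type*} [Fintype V] [DecidableEq V]

lemma core {G : SimpleGraph V} [DecidableRel G.Adj] (hG : G.CliqueFree 3)
    {F : Finset (Sym2 V)} (hFE : F ⊆ G.edgeFinset) (hF : F.Nonempty) :
    ∃ S : Finset V, (∀ e ∈ F, ∃ a ∈ S, a ∈ e) ∧
      ((S.card : ℝ) * F.card ≤
        (F.card : ℝ) + 3 * ((F.card : ℝ) * ((F.card : ℝ) + 1)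
          - ∑ u, (degIn F u : ℝ) * (degIn F u : ℝ))) := by
  classical
  obtain ⟨e0, he0⟩ := hF
  obtain ⟨a0, b0, hab0, he0eq⟩ := exists_repr hFE he0
  obtain ⟨x, -, hxmax⟩ := Finset.exists_max_image univ (degIn F) ⟨a0, Finset.mem_univ _⟩
  have hxmax' : ∀ u : V, degIn F u ≤ degIn F x := fun u => hxmax u (Finset.mem_univ u)
  set m := F.card with hm
  set Δ := degIn F x with hΔ
  have hΔ1 : 1 ≤ Δ := by
    have : s(a0, b0) ∈ F.filter (fun e => a0 ∈ e) := by
      rw [Finset.mem_filter]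
      exact ⟨he0eq ▸ he0, Sym2.mem_mk_left a0 b0⟩
    have h1 : 1 ≤ degIn F a0 := Finset.card_pos.2 ⟨_, this⟩
    exact h1.trans (hxmax' a0)
  set Fout := F.filter (fun e => x ∉ e) with hFout
  set t := Fout.card with ht
  have hmt : Δ + t = m := by
    rw [hΔ, ht, hFout, degIn]
    exact Finset.card_filter_add_card_filter_not ..
  have hfne : F.filter (fun e => ¬ x ∈ e) = Fout := rfl
  clear_value m Δ Fout t
  -- degree-square double count
  have hD2 : ∑ u, degIn F u * degIn F u
      = ∑ e ∈ F, ∑ u ∈ univ.filter (fun u => u ∈ e), degIn F u :=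
    sum_degIn_mul F (degIn F)
  have hedsum : ∀ {a b : V}, a ≠ b →
      ∑ u ∈ univ.filter (fun u => u ∈ s(a, b)), degIn F u = degIn F a + degIn F b := by
    intro a b hab
    rw [filter_mem_univ hab, Finset.sum_pair hab]
  -- star part
  have hstar : ∑ e ∈ F.filter (fun e => x ∈ e), ∑ u ∈ univ.filter (fun u => u ∈ e), degIn F u
      ≤ Δ * Δ + m := by
    rw [← image_nbr hFE x, Finset.sum_image (by intro a _ b _ h; exact Sym2.congr_right.1 h)]
    have hxu : ∀ u ∈ univ.filter (fun u => s(x, u) ∈ F), x ≠ u := by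
      intro u hu h
      rw [Finset.mem_filter] at hu
      exact proper hFE hu.2 (by simp [h])
    calc ∑ u ∈ univ.filter (fun u => s(x, u) ∈ F),
            ∑ w ∈ univ.filter (fun w => w ∈ s(x, u)), degIn F w
        = ∑ u ∈ univ.filter (fun u => s(x, u) ∈ F), (Δ + degIn F u) := by
          refine Finset.sum_congr rfl fun u hu => ?_
          rw [hedsum (hxu u hu), ← hΔ]
      _ = (univ.filter (fun u => s(x, u) ∈ F)).card * Δ
            + ∑ u ∈ univ.filter (fun u => s(x, u) ∈ F), degIn F u := by
          rw [Finset.sum_add_distrib, Finset.sum_const, smul_eq_mul]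
      _ ≤ Δ * Δ + m := by
          rw [card_nbr hFE x, ← hΔ, hm]
          exact Nat.add_le_add_left (sum_deg_nbr hFE hG x) _
  -- out part
  have hout : ∀ e ∈ Fout, (∑ u ∈ univ.filter (fun u => u ∈ e), degIn F u) + Δ ≤ m + 2 := by
    intro e he
    rw [hFout, Finset.mem_filter] at he
    obtain ⟨heF, hxe⟩ := he
    obtain ⟨a, b, hab, rfl⟩ := exists_repr hFE heF
    have hxa : x ≠ a := fun h => hxe (by simp [h])
    have hxb : x ≠ b := fun h => hxe (by simp [h])
    rw [hedsum hab, hm, hΔ]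
    exact deg_triple hFE hG heF hab hxa hxb
  have houtr : ((∑ e ∈ Fout, ∑ u ∈ univ.filter (fun u => u ∈ e), degIn F u : ℕ) : ℝ)
      ≤ (t : ℝ) * ((m : ℝ) + 2 - Δ) := by
    rw [Nat.cast_sum]
    calc ∑ e ∈ Fout, ((∑ u ∈ univ.filter (fun u => u ∈ e), degIn F u : ℕ) : ℝ)
        ≤ ∑ _e ∈ Fout, ((m : ℝ) + 2 - Δ) := by
          refine Finset.sum_le_sum fun e he => ?_
          have h1 := hout e he
          have h2 : ((∑ u ∈ univ.filter (fun u => u ∈ e), degIn F u : ℕ) : ℝ) + (Δ : ℝ)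
              ≤ (m : ℝ) + 2 := by exact_mod_cast h1
          linarith
      _ = (t : ℝ) * ((m : ℝ) + 2 - Δ) := by
          rw [Finset.sum_const, ← ht, nsmul_eq_mul]
  have hstarr : ((∑ e ∈ F.filter (fun e => x ∈ e),
        ∑ u ∈ univ.filter (fun u => u ∈ e), degIn F u : ℕ) : ℝ)
      ≤ (Δ : ℝ) * Δ + m := by exact_mod_cast hstar
  have hsplit : ∑ u, degIn F u * degIn F u
      = (∑ e ∈ F.filter (fun e => x ∈ e), ∑ u ∈ univ.filter (fun u => u ∈ e), degIn F u)
        + ∑ e ∈ Fout, ∑ u ∈ univ.filter (fun u => u ∈ e), degIn F u := by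
    rw [hD2, ← Finset.sum_filter_add_sum_filter_not F (fun e => x ∈ e), hfne]
  have hD2r : (∑ u, (degIn F u : ℝ) * (degIn F u : ℝ))
      ≤ (Δ : ℝ) * Δ + m + (t : ℝ) * ((m : ℝ) + 2 - Δ) := by
    have hs : (∑ u, (degIn F u : ℝ) * (degIn F u : ℝ))
        = ((∑ e ∈ F.filter (fun e => x ∈ e),
            ∑ u ∈ univ.filter (fun u => u ∈ e), degIn F u : ℕ) : ℝ)
          + ((∑ e ∈ Fout, ∑ u ∈ univ.filter (fun u => u ∈ e), degIn F u : ℕ) : ℝ) := by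
      exact_mod_cast congrArg (Nat.cast : ℕ → ℝ) hsplit
    rw [hs]
    linarith
  have hmtr : (Δ : ℝ) + t = m := by exact_mod_cast hmt
  have hm0 : (0 : ℝ) ≤ m := Nat.cast_nonneg m
  have ht0 : (0 : ℝ) ≤ t := Nat.cast_nonneg t
  by_cases hcase : m + 3 ≤ 3 * Δ
  · -- big star case
    refine ⟨insert x (Fout.biUnion (fun e => univ.filter (fun u => u ∈ e))), ?_, ?_⟩
    · intro e he
      by_cases hx : x ∈ e
      · exact ⟨x, Finset.mem_insert_self _ _, hx⟩
      · obtain ⟨a, b, hab, rfl⟩ := exists_repr hFE he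
        refine ⟨a, Finset.mem_insert_of_mem ?_, Sym2.mem_mk_left a b⟩
        exact Finset.mem_biUnion.2 ⟨s(a, b), by rw [hFout, Finset.mem_filter]; exact ⟨he, hx⟩,
          by simp⟩
    · have hcard : (insert x (Fout.biUnion (fun e => univ.filter (fun u => u ∈ e)))).card
          ≤ 1 + 2 * t := by
        refine (Finset.card_insert_le _ _).trans ?_
        have h1 : (Fout.biUnion (fun e => univ.filter (fun u => u ∈ e))).card ≤ 2 * t := by
          refine (Finset.card_biUnion_le).trans ?_
          have : ∀ e ∈ Fout, (univ.filter (fun u => u ∈ e)).card ≤ 2 := by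
            intro e he
            rw [hFout, Finset.mem_filter] at he
            obtain ⟨a, b, hab, rfl⟩ := exists_repr hFE he.1
            rw [filter_mem_univ hab]
            exact Finset.card_insert_le _ _ |>.trans (by simp)
          calc ∑ e ∈ Fout, (univ.filter (fun u => u ∈ e)).card ≤ ∑ _e ∈ Fout, 2 :=
                Finset.sum_le_sum this
            _ = 2 * t := by rw [Finset.sum_const, smul_eq_mul, mul_comm, ← ht]
        omega
      have hSr : ((insert x (Fout.biUnion (fun e => univ.filter (fun u => u ∈ e)))).card : ℝ)
          ≤ 1 + 2 * t := by exact_mod_cast hcard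
      have hcr : (m : ℝ) + 3 ≤ 3 * Δ := by exact_mod_cast hcase
      nlinarith [mul_le_mul_of_nonneg_right hSr hm0,
        mul_nonneg ht0 (by linarith : (0 : ℝ) ≤ 2 * (Δ : ℝ) - t - 3)]
  · -- small max degree case
    refine ⟨F.image (fun e => e.out.1), ?_, ?_⟩
    · intro e he
      exact ⟨e.out.1, Finset.mem_image_of_mem _ he, Sym2.out_fst_mem e⟩
    · have hSr : ((F.image (fun e => e.out.1)).card : ℝ) ≤ m := by
        have h0 : (F.image (fun e => e.out.1)).card ≤ m := hm ▸ Finset.card_image_le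
        exact_mod_cast h0
      have hub : ∀ e ∈ F, ∑ u ∈ univ.filter (fun u => u ∈ e), degIn F u ≤ Δ + Δ := by
        intro e he
        obtain ⟨a, b, hab, rfl⟩ := exists_repr hFE he
        rw [hedsum hab]
        exact Nat.add_le_add (hxmax' a) (hxmax' b)
      have hD2b : ∑ u, degIn F u * degIn F u ≤ m * (Δ + Δ) := by
        rw [hD2]
        calc ∑ e ∈ F, ∑ u ∈ univ.filter (fun u => u ∈ e), degIn F u
            ≤ ∑ _e ∈ F, (Δ + Δ) := Finset.sum_le_sum hub
          _ = m * (Δ + Δ) := by rw [Finset.sum_const, smul_eq_mul, ← hm]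
      have hD2br : (∑ u, (degIn F u : ℝ) * (degIn F u : ℝ)) ≤ (m : ℝ) * (Δ + Δ) := by
        have : ((∑ u, degIn F u * degIn F u : ℕ) : ℝ) ≤ ((m * (Δ + Δ) : ℕ) : ℝ) :=
          Nat.cast_le.2 hD2b
        push_cast at this
        convert this using 1
      have hcr : 3 * (Δ : ℝ) ≤ (m : ℝ) + 2 := by
        have : 3 * Δ ≤ m + 2 := by omega
        exact_mod_cast this
      nlinarith [mul_le_mul_of_nonneg_right hSr hm0,
        mul_le_mul_of_nonneg_left hcr hm0]

end VCaux

/-- If the edge set of a triangle-free simple graph `G` with `m` edges is partitioned into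
`k ≥ 1` nonempty parts `F_1, …, F_k` with `∑_i Cost(F_i) ≤ m − (1 − δ)·k` (for some `δ ≥ 0`),
then `G` has a vertex cover of size at most `(1 + 3δ)·k`. -/
theorem vertexCover_of_cheap_partition {V : Type*} [Fintype V] [DecidableEq V]
    (G : SimpleGraph V) [DecidableRel G.Adj] (hG : G.CliqueFree 3)
    (δ : ℝ) (hδ : 0 ≤ δ) (k : ℕ) (hk : 1 ≤ k)
    (P : Fin k → Finset (Sym2 V))
    (hne : ∀ i, (P i).Nonempty)
    (hdisj : ∀ i j, i ≠ j → Disjoint (P i) (P j))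
    (hcover : ∀ e, e ∈ G.edgeFinset ↔ ∃ i, e ∈ P i)
    (hcost : ∑ i : Fin k, ∑ u : V,
        (degIn (P i) u : ℝ) * (1 - (degIn (P i) u : ℝ) / ((P i).card : ℝ))
      ≤ (G.edgeFinset.card : ℝ) - (1 - δ) * k) :
    ∃ S : Finset V, IsVertexCover G S ∧ (S.card : ℝ) ≤ (1 + 3 * δ) * k := by
  classical
  have hPE : ∀ i, P i ⊆ G.edgeFinset := fun i e he => (hcover e).2 ⟨i, he⟩
  choose S hScov hScard using fun i => VCaux.core hG (hPE i) (hne i)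
  refine ⟨Finset.univ.biUnion S, ?_, ?_⟩
  · intro u v huv
    have he : s(u, v) ∈ G.edgeFinset :=
      SimpleGraph.mem_edgeFinset.2 ((SimpleGraph.mem_edgeSet G).2 huv)
    obtain ⟨i, hi⟩ := (hcover _).1 he
    obtain ⟨a, haS, hae⟩ := hScov i _ hi
    have haT : a ∈ Finset.univ.biUnion S :=
      Finset.mem_biUnion.2 ⟨i, Finset.mem_univ i, haS⟩
    rcases Sym2.mem_iff.1 hae with rfl | rfl
    · exact Or.inl haT
    · exact Or.inr haT
  · have hTcard : ((Finset.univ.biUnion S).card : ℝ) ≤ ∑ i, ((S i).card : ℝ) := by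
      have h0 : (Finset.univ.biUnion S).card ≤ ∑ i, (S i).card := Finset.card_biUnion_le
      exact_mod_cast h0
    have hmi : ∀ i, (0 : ℝ) < ((P i).card : ℝ) := fun i => by
      exact_mod_cast Finset.card_pos.2 (hne i)
    have hsum2 : ∀ i, (∑ u, (degIn (P i) u : ℝ)) = 2 * ((P i).card : ℝ) := fun i => by
      exact_mod_cast congrArg (Nat.cast : ℕ → ℝ) (VCaux.sum_degIn (hPE i))
    have hCost : ∀ i,
        (∑ u, (degIn (P i) u : ℝ) * (1 - (degIn (P i) u : ℝ) / ((P i).card : ℝ)))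
            * ((P i).card : ℝ)
          = 2 * ((P i).card : ℝ) * ((P i).card : ℝ)
            - ∑ u, (degIn (P i) u : ℝ) * (degIn (P i) u : ℝ) := by
      intro i
      rw [Finset.sum_mul]
      have hterm : ∀ u : V,
          (degIn (P i) u : ℝ) * (1 - (degIn (P i) u : ℝ) / ((P i).card : ℝ))
              * ((P i).card : ℝ)
            = (degIn (P i) u : ℝ) * ((P i).card : ℝ)
              - (degIn (P i) u : ℝ) * (degIn (P i) u : ℝ) := by
        intro u
        field_simp
      rw [Finset.sum_congr rfl fun u _ => hterm u, Finset.sum_sub_distrib, ← Finset.sum_mul,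
        hsum2 i]
    have hkey : ∀ i, ((S i).card : ℝ)
        ≤ 1 + 3 * ((∑ u, (degIn (P i) u : ℝ) * (1 - (degIn (P i) u : ℝ) / ((P i).card : ℝ)))
            - ((P i).card : ℝ) + 1) := by
      intro i
      rw [← mul_le_mul_iff_of_pos_right (hmi i)]
      nlinarith [hCost i, hScard i]
    have hedge : G.edgeFinset = Finset.univ.biUnion P := by
      ext e
      simp only [Finset.mem_biUnion, Finset.mem_univ, true_and]
      exact hcover e
    have hmsum : ∑ i, (P i).card = G.edgeFinset.card := by
      rw [hedge, Finset.card_biUnion (fun i _ j _ hij => hdisj i j hij)]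
    have hmr : (∑ i, ((P i).card : ℝ)) = (G.edgeFinset.card : ℝ) := by
      exact_mod_cast congrArg (Nat.cast : ℕ → ℝ) hmsum
    calc ((Finset.univ.biUnion S).card : ℝ)
        ≤ ∑ i, ((S i).card : ℝ) := hTcard
      _ ≤ ∑ i, (1 + 3 * ((∑ u, (degIn (P i) u : ℝ)
            * (1 - (degIn (P i) u : ℝ) / ((P i).card : ℝ))) - ((P i).card : ℝ) + 1)) :=
          Finset.sum_le_sum fun i _ => hkey i
      _ = 4 * k + 3 * (∑ i, ∑ u, (degIn (P i) u : ℝ)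
            * (1 - (degIn (P i) u : ℝ) / ((P i).card : ℝ))) - 3 * ∑ i, ((P i).card : ℝ) := by
          simp only [mul_add, mul_sub, mul_one, Finset.sum_add_distrib, Finset.sum_sub_distrib,
            Finset.sum_const, Finset.card_univ, Fintype.card_fin, nsmul_eq_mul,
            ← Finset.mul_sum]
          ring
      _ ≤ (1 + 3 * δ) * k := by
          rw [hmr]
          have hkr : (1 : ℝ) ≤ (k : ℝ) := by exact_mod_cast hk
          nlinarith [hcost]
end

section
/- Let G = (V,E) be a finite simple triangle-free graph on vertex set {1,...,n} with m edges, let δ with 0 ≤ δ ≤ 1, let k ≥ 1, and for each edge e = {i,j} let x_e = e_i + e_j ∈ ℝ^n. If there exist k points c_1, ..., c_k ∈ ℝ^n with ∑_{e∈E} min_{1≤i≤k} ‖x_e − c_i‖² ≤ m − (1 − δ)·k, then G has a vertex cover of size at most (1 + 3δ)·k. -/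
open Finset

namespace VCKMeans

variable {n : ℕ}

lemma edgePoint_apply {u w : Fin n} (huw : u ≠ w) (v : Fin n) :
    edgePoint s(u, w) v = if v ∈ (s(u, w) : Sym2 (Fin n)) then 1 else 0 := by
  have h2 : edgePoint s(u,w) v
      = EuclideanSpace.single u (1:ℝ) v + EuclideanSpace.single w (1:ℝ) v := rfl
  rw [h2, EuclideanSpace.single_apply, EuclideanSpace.single_apply]
  simp only [Sym2.mem_iff]
  by_cases h1 : v = u <;> by_cases h2 : v = w <;> simp [h1, h2] <;> simp_all

lemma edgePoint_apply' {e : Sym2 (Fin n)} (he : ¬ e.IsDiag) (v : Fin n) :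
    edgePoint e v = if v ∈ e then 1 else 0 := by
  obtain ⟨⟨u, w⟩, rfl⟩ := e.exists_rep
  have huw : u ≠ w := by simpa [Sym2.isDiag_iff_proj_eq] using he
  exact edgePoint_apply huw v

lemma filter_mem_sym2 {u w : Fin n} :
    Finset.univ.filter (fun v => v ∈ (s(u,w) : Sym2 (Fin n))) = {u, w} := by
  ext v; simp [Sym2.mem_iff]

lemma card_filter_mem {e : Sym2 (Fin n)} (he : ¬ e.IsDiag) :
    (Finset.univ.filter (fun v => v ∈ e)).card = 2 := by
  obtain ⟨⟨u, w⟩, rfl⟩ := e.exists_rep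
  have huw : u ≠ w := by simpa [Sym2.isDiag_iff_proj_eq] using he
  rw [show Quot.mk _ (u,w) = s(u,w) from rfl, filter_mem_sym2, Finset.card_pair huw]

lemma sum_deg (C : Finset (Sym2 (Fin n))) (hnd : ∀ e ∈ C, ¬ e.IsDiag) :
    ∑ v : Fin n, (C.filter (fun e => v ∈ e)).card = 2 * C.card := by
  have h : ∀ v : Fin n, (C.filter (fun e => v ∈ e)).card = ∑ e ∈ C, if v ∈ e then 1 else 0 := by
    intro v; rw [Finset.card_filter]
  simp_rw [h]
  rw [Finset.sum_comm]
  have h2 : ∀ e ∈ C, (∑ v : Fin n, if v ∈ e then 1 else 0) = 2 := by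
    intro e he
    rw [← Finset.sum_filter]
    simpa using card_filter_mem (hnd e he)
  rw [Finset.sum_congr rfl h2, Finset.sum_const, smul_eq_mul, mul_comm]

lemma sum_deg_sq (C : Finset (Sym2 (Fin n))) :
    ∑ v : Fin n, ((C.filter (fun e => v ∈ e)).card)^2
      = ∑ e ∈ C, ∑ v ∈ Finset.univ.filter (fun v => v ∈ e),
          (C.filter (fun e' => v ∈ e')).card := by
  have h : ∀ v : Fin n, ((C.filter (fun e => v ∈ e)).card)^2
      = ∑ e ∈ C, if v ∈ e then (C.filter (fun e' => v ∈ e')).card else 0 := by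
    intro v
    rw [← Finset.sum_filter, Finset.sum_const, smul_eq_mul, sq]
  simp_rw [h]
  rw [Finset.sum_comm]
  congr 1; ext e
  rw [← Finset.sum_filter]

lemma norm_sq_eq (y : EuclideanSpace ℝ (Fin n)) : ‖y‖^2 = ∑ v, (y v)^2 := by
  rw [EuclideanSpace.norm_eq, Real.sq_sqrt (by positivity)]
  simp [Real.norm_eq_abs, sq_abs]

/-- Analytic lower bound on the 1-means cost of a cluster of edge points. -/
lemma cost_bound (C : Finset (Sym2 (Fin n))) (hnd : ∀ e ∈ C, ¬ e.IsDiag)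
    (c : EuclideanSpace ℝ (Fin n)) :
    2 * (C.card:ℝ)^2 ≤ (C.card:ℝ) * (∑ e ∈ C, ‖edgePoint e - c‖^2)
      + ∑ v : Fin n, (((C.filter (fun e => v ∈ e)).card : ℝ))^2 := by
  set m := C.card with hm
  set d : Fin n → ℕ := fun v => (C.filter (fun e => v ∈ e)).card with hd
  have hdm : ∀ v, d v ≤ m := fun v => Finset.card_filter_le _ _
  have h1 : ∑ e ∈ C, ‖edgePoint e - c‖^2
      = ∑ v : Fin n, ((d v : ℝ) * (1 - c v)^2 + ((m : ℝ) - d v) * (c v)^2) := by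
    have key : ∀ e ∈ C, ‖edgePoint e - c‖^2
        = ∑ v : Fin n, ((if v ∈ e then (1:ℝ) else 0) - c v)^2 := by
      intro e he
      rw [norm_sq_eq]
      refine Finset.sum_congr rfl fun v _ => ?_
      have h : (edgePoint e - c) v = edgePoint e v - c v := rfl
      rw [h, edgePoint_apply' (hnd e he) v]
    rw [Finset.sum_congr rfl key, Finset.sum_comm]
    refine Finset.sum_congr rfl fun v _ => ?_
    rw [← Finset.sum_filter_add_sum_filter_not C (fun e => v ∈ e)]
    have hA : ∑ e ∈ C.filter (fun e => v ∈ e), ((if v ∈ e then (1:ℝ) else 0) - c v)^2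
        = (d v : ℝ) * (1 - c v)^2 := by
      rw [Finset.sum_congr rfl (fun e he => by
        rw [if_pos (Finset.mem_filter.mp he).2]), Finset.sum_const, nsmul_eq_mul]
    have hB : ∑ e ∈ C.filter (fun e => ¬ v ∈ e), ((if v ∈ e then (1:ℝ) else 0) - c v)^2
        = ((m : ℝ) - d v) * (c v)^2 := by
      rw [Finset.sum_congr rfl (fun e he => by
        rw [if_neg (Finset.mem_filter.mp he).2]), Finset.sum_const, nsmul_eq_mul]
      have h := Finset.card_filter_add_card_filter_not (s := C) (p := fun e => v ∈ e)
      have h' : d v + (C.filter (fun e => ¬ v ∈ e)).card = m := h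
      have hcard : (C.filter (fun e => ¬ v ∈ e)).card = m - d v := by omega
      rw [hcard, Nat.cast_sub (hdm v)]
      ring
    rw [hA, hB]
  rw [h1]
  have hds : ∑ v : Fin n, (d v : ℝ) = 2 * m := by
    rw [← Nat.cast_sum]
    norm_cast
    exact sum_deg C hnd
  have h2 : (m:ℝ) * (∑ v : Fin n, ((d v : ℝ) * (1 - c v)^2 + ((m : ℝ) - d v) * (c v)^2))
      + ∑ v : Fin n, ((d v : ℝ))^2
      = (∑ v : Fin n, ((m:ℝ) * c v - d v)^2) + (m:ℝ) * ∑ v : Fin n, (d v : ℝ) := by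
    rw [Finset.mul_sum, Finset.mul_sum, ← Finset.sum_add_distrib, ← Finset.sum_add_distrib]
    exact Finset.sum_congr rfl fun v _ => by ring
  rw [h2, hds]
  have h3 : 0 ≤ ∑ v : Fin n, ((m:ℝ) * c v - d v)^2 := Finset.sum_nonneg fun v _ => sq_nonneg _
  nlinarith

/-- In a triangle-free graph, a cluster of edges all touching `u` or `w` (with `uw` an edge
of the cluster) admits a cover of size at most the degree of `u` in the cluster. -/
lemma star_cover (G : SimpleGraph (Fin n)) [DecidableRel G.Adj] (hG : G.CliqueFree 3)
    (C : Finset (Sym2 (Fin n))) (hC : C ⊆ G.edgeFinset) {u w : Fin n} (hadj : G.Adj u w)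
    (he : s(u,w) ∈ C) (hall : ∀ e ∈ C, u ∈ e ∨ w ∈ e) :
    ∃ S : Finset (Fin n), (∀ e ∈ C, ∃ v ∈ S, v ∈ e) ∧
      S.card ≤ (C.filter (fun e => u ∈ e)).card := by
  classical
  set d : Fin n → ℕ := fun v => (C.filter (fun e => v ∈ e)).card with hd
  set F : Finset (Fin n) :=
    Finset.univ.filter (fun v => G.Adj u v ∧ v ≠ w ∧ 1 ≤ d v) with hF
  have hadjC : ∀ e ∈ C, ∀ x y : Fin n, e = s(x,y) → G.Adj x y := by
    intro e heC x y hxy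
    have h := hC heC
    rw [SimpleGraph.mem_edgeFinset, hxy, SimpleGraph.mem_edgeSet] at h
    exact h
  have key : ∀ v ∈ F, s(u,v) ∈ C := by
    intro v hv
    rw [hF, Finset.mem_filter] at hv
    obtain ⟨-, hadjuv, hvw, hdv⟩ := hv
    obtain ⟨e, heM⟩ := Finset.card_pos.mp hdv
    rw [Finset.mem_filter] at heM
    rcases hall e heM.1 with hu | hw
    · have h : e = s(u,v) := (Sym2.mem_and_mem_iff hadjuv.ne).mp ⟨hu, heM.2⟩
      exact h ▸ heM.1
    · have h : e = s(w,v) := (Sym2.mem_and_mem_iff (Ne.symm hvw)).mp ⟨hw, heM.2⟩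
      have hadjwv : G.Adj w v := hadjC e heM.1 w v h
      exact absurd (SimpleGraph.is3Clique_triple_iff.mpr ⟨hadj, hadjuv, hadjwv⟩)
        (hG {u, w, v})
  refine ⟨insert w F, ?_, ?_⟩
  · intro e heC
    by_cases hw : w ∈ e
    · exact ⟨w, Finset.mem_insert_self _ _, hw⟩
    have hu : u ∈ e := (hall e heC).resolve_right hw
    obtain ⟨⟨x, y⟩, rfl⟩ := e.exists_rep
    rw [show Quot.mk _ (x,y) = s(x,y) from rfl] at *
    have hdx : 1 ≤ d x := Finset.card_pos.mpr ⟨s(x,y), Finset.mem_filter.mpr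
      ⟨heC, Sym2.mem_mk_left _ _⟩⟩
    have hdy : 1 ≤ d y := Finset.card_pos.mpr ⟨s(x,y), Finset.mem_filter.mpr
      ⟨heC, Sym2.mem_mk_right _ _⟩⟩
    rw [Sym2.mem_iff] at hu
    rcases hu with rfl | rfl
    · refine ⟨y, Finset.mem_insert_of_mem ?_, Sym2.mem_mk_right _ _⟩
      rw [hF, Finset.mem_filter]
      exact ⟨Finset.mem_univ _, hadjC _ heC _ _ rfl,
        fun h => hw (h ▸ Sym2.mem_mk_right _ _), hdy⟩
    · refine ⟨x, Finset.mem_insert_of_mem ?_, Sym2.mem_mk_left _ _⟩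
      rw [hF, Finset.mem_filter]
      refine ⟨Finset.mem_univ _, (hadjC _ heC _ _ rfl).symm,
        fun h => hw (h ▸ Sym2.mem_mk_left _ _), hdx⟩
  · have hsub : ({s(u,w)} : Finset (Sym2 (Fin n))) ⊆ C.filter (fun e => u ∈ e) := by
      intro e heM
      rw [Finset.mem_singleton] at heM
      subst heM
      exact Finset.mem_filter.mpr ⟨he, Sym2.mem_mk_left _ _⟩
    have hFle : F.card ≤ (C.filter (fun e => u ∈ e) \ {s(u,w)}).card := by
      apply Finset.card_le_card_of_injOn (fun v => s(u,v))
      · intro v hv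
        rw [Finset.mem_coe, Finset.mem_sdiff, Finset.mem_singleton]
        rw [Finset.mem_coe, hF, Finset.mem_filter] at hv
        refine ⟨Finset.mem_filter.mpr ⟨key v (by rw [hF]; exact Finset.mem_filter.mpr hv),
          Sym2.mem_mk_left _ _⟩, fun hcontra => hv.2.2.1 (Sym2.congr_right.mp hcontra)⟩
      · intro a _ b _ hab
        exact Sym2.congr_right.mp hab
    have hcardsd : (C.filter (fun e => u ∈ e) \ {s(u,w)}).card
        = (C.filter (fun e => u ∈ e)).card - 1 := by
      rw [Finset.card_sdiff_of_subset hsub, Finset.card_singleton]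
    have hpos : 1 ≤ (C.filter (fun e => u ∈ e)).card :=
      Finset.card_pos.mpr ⟨s(u,w), hsub (Finset.mem_singleton_self _)⟩
    have h := Finset.card_insert_le w F
    omega

lemma arith_star (m Du Dw T s : ℤ) (h1 : Du + Dw = m + 1) (h2 : 1 ≤ Du) (h3 : Du ≤ Dw)
    (h4 : T + (Du + Dw) ≤ Du^2 + Dw^2 + 2*m) (h5 : s ≤ Du) :
    s * m + 3 * T ≤ m + 3 * m * (m + 1) := by
  rcases le_or_gt Du 1 with hc | hc
  · have hDu : Du = 1 := le_antisymm hc h2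
    subst hDu
    nlinarith
  · have hDw2 : 2 ≤ Dw := le_trans hc h3
    have key : 0 ≤ (Du - 1) * (6 * (Dw - 1) - m) := by
      apply mul_nonneg <;> nlinarith
    nlinarith

lemma arith_nonstar (m Dsum T s t : ℤ) (h1 : Dsum + t = m + 1) (h2 : 1 ≤ t)
    (h3 : T ≤ m * Dsum) (h4 : s ≤ 2 + t) (hm : 0 ≤ m) :
    s * m + 3 * T ≤ m + 3 * m * (m + 1) := by
  nlinarith [mul_nonneg hm (by linarith : (0:ℤ) ≤ 2*t - 1)]

/-- Combinatorial core: a cluster of edges of a triangle-free graph has a cover whose size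
is controlled by the sum of squared degrees. -/
lemma cluster_cover (G : SimpleGraph (Fin n)) [DecidableRel G.Adj] (hG : G.CliqueFree 3)
    (C : Finset (Sym2 (Fin n))) (hC : C ⊆ G.edgeFinset) :
    ∃ S : Finset (Fin n), (∀ e ∈ C, ∃ v ∈ S, v ∈ e) ∧
      S.card * C.card + 3 * ∑ v : Fin n, ((C.filter (fun e => v ∈ e)).card)^2
        ≤ C.card + 3 * C.card * (C.card + 1) := by
  classical
  rcases C.eq_empty_or_nonempty with rfl | hne
  · exact ⟨∅, by simp, by simp⟩
  have hnd : ∀ e ∈ C, ¬ e.IsDiag := fun e he =>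
    G.not_isDiag_of_mem_edgeSet (SimpleGraph.mem_edgeFinset.mp (hC he))
  set d : Fin n → ℕ := fun v => (C.filter (fun e => v ∈ e)).card with hd
  set m := C.card with hm
  set T := ∑ v : Fin n, (d v)^2 with hTdef
  set f : Sym2 (Fin n) → ℕ := fun e => ∑ v ∈ Finset.univ.filter (fun v => v ∈ e), d v with hf
  have hT : T = ∑ e ∈ C, f e := sum_deg_sq C
  obtain ⟨estar, heC, hmax⟩ := C.exists_max_image f hne
  obtain ⟨⟨u, w⟩, rfl⟩ := estar.exists_rep
  rw [show Quot.mk _ (u,w) = s(u,w) from rfl] at *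
  have hadj : G.Adj u w := by
    have h := hC heC
    rwa [SimpleGraph.mem_edgeFinset, SimpleGraph.mem_edgeSet] at h
  have huw : u ≠ w := hadj.ne
  have hfstar : f s(u,w) = d u + d w := by
    rw [hf]; simp only []
    rw [filter_mem_sym2, Finset.sum_pair huw]
  have hTle : T ≤ m * (d u + d w) := by
    rw [hT]
    calc ∑ e ∈ C, f e ≤ ∑ _e ∈ C, f s(u,w) := Finset.sum_le_sum hmax
      _ = m * (d u + d w) := by rw [Finset.sum_const, smul_eq_mul, hfstar]
  set A := C.filter (fun e => u ∈ e ∨ w ∈ e) with hA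
  set B := C.filter (fun e => ¬(u ∈ e ∨ w ∈ e)) with hB
  have hAB : A.card + B.card = m :=
    Finset.card_filter_add_card_filter_not (p := fun e => u ∈ e ∨ w ∈ e)
  have hAcard : A.card + 1 = d u + d w := by
    have h1 : A = C.filter (fun e => u ∈ e) ∪ C.filter (fun e => w ∈ e) := by
      rw [hA, Finset.filter_or]
    have h2 : C.filter (fun e => u ∈ e) ∩ C.filter (fun e => w ∈ e) = {s(u,w)} := by
      ext e
      simp only [Finset.mem_inter, Finset.mem_filter, Finset.mem_singleton]
      constructor
      · rintro ⟨⟨heC', hu⟩, ⟨-, hw⟩⟩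
        exact (Sym2.mem_and_mem_iff huw).mp ⟨hu, hw⟩
      · rintro rfl
        exact ⟨⟨heC, Sym2.mem_mk_left _ _⟩, ⟨heC, Sym2.mem_mk_right _ _⟩⟩
    have h3 := Finset.card_union_add_card_inter (C.filter (fun e => u ∈ e))
      (C.filter (fun e => w ∈ e))
    rw [h2, Finset.card_singleton, ← h1] at h3
    exact h3
  have hdu1 : 1 ≤ d u := Finset.card_pos.mpr ⟨s(u,w), Finset.mem_filter.mpr
    ⟨heC, Sym2.mem_mk_left _ _⟩⟩
  have hdw1' : 1 ≤ d w := Finset.card_pos.mpr ⟨s(u,w), Finset.mem_filter.mpr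
    ⟨heC, Sym2.mem_mk_right _ _⟩⟩
  by_cases ht : B.card = 0
  -- star-like case
  · have hBempty : B = ∅ := Finset.card_eq_zero.mp ht
    have hall : ∀ e ∈ C, u ∈ e ∨ w ∈ e := by
      intro e heC'
      by_contra hcon
      have h : e ∈ B := Finset.mem_filter.mpr ⟨heC', hcon⟩
      simp [hBempty] at h
    have hdsum : d u + d w = m + 1 := by omega
    have hdeg1 : ∀ v : Fin n, v ≠ u → v ≠ w → d v ≤ 1 := by
      intro v hvu hvw
      by_contra hcon
      push_neg at hcon
      obtain ⟨e1, he1, e2, he2, hne12⟩ := Finset.one_lt_card.mp hcon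
      rw [Finset.mem_filter] at he1 he2
      have hshape : ∀ e' : Sym2 (Fin n), e' ∈ C → v ∈ e' → e' = s(u,v) ∨ e' = s(w,v) := by
        intro e' he' hv
        rcases hall e' he' with h | h
        · exact Or.inl ((Sym2.mem_and_mem_iff (Ne.symm hvu)).mp ⟨h, hv⟩)
        · exact Or.inr ((Sym2.mem_and_mem_iff (Ne.symm hvw)).mp ⟨h, hv⟩)
      have hadjC : ∀ (x y : Fin n), s(x,y) ∈ C → G.Adj x y := by
        intro x y hxy
        have h := hC hxy
        rwa [SimpleGraph.mem_edgeFinset, SimpleGraph.mem_edgeSet] at h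
      rcases hshape e1 he1.1 he1.2 with h1 | h1 <;>
        rcases hshape e2 he2.1 he2.2 with h2 | h2
      · exact hne12 (h1.trans h2.symm)
      · exact (hG {u, w, v}) (SimpleGraph.is3Clique_triple_iff.mpr
          ⟨hadj, hadjC u v (h1 ▸ he1.1), hadjC w v (h2 ▸ he2.1)⟩)
      · exact (hG {u, w, v}) (SimpleGraph.is3Clique_triple_iff.mpr
          ⟨hadj, hadjC u v (h2 ▸ he2.1), hadjC w v (h1 ▸ he1.1)⟩)
      · exact hne12 (h1.trans h2.symm)
    have hsplit : ∀ g : Fin n → ℕ,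
        ∑ v ∈ Finset.univ \ {u, w}, g v + (g u + g w) = ∑ v : Fin n, g v := by
      intro g
      rw [← Finset.sum_pair huw]
      exact Finset.sum_sdiff (Finset.subset_univ _)
    have hsd1 : ∑ v ∈ Finset.univ \ {u, w}, (d v)^2 ≤ ∑ v ∈ Finset.univ \ {u, w}, d v := by
      apply Finset.sum_le_sum
      intro v hv
      rw [Finset.mem_sdiff, Finset.mem_insert, Finset.mem_singleton] at hv
      push_neg at hv
      have h := hdeg1 v hv.2.1 hv.2.2
      interval_cases hy : d v <;> simp
    have hsum2m : ∑ v ∈ Finset.univ \ {u, w}, d v + (d u + d w) = 2 * m := by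
      rw [hsplit]
      exact sum_deg C hnd
    have hTbound : T + (d u + d w) ≤ (d u)^2 + (d w)^2 + 2 * m := by
      have h := hsplit (fun v => (d v)^2)
      simp only [hTdef] at *
      omega
    obtain ⟨S1, hc1, hs1⟩ := star_cover G hG C hC hadj heC hall
    obtain ⟨S2, hc2, hs2⟩ := star_cover G hG C hC hadj.symm
      (by rwa [Sym2.eq_swap]) (fun e he' => (hall e he').symm)
    rcases le_total (d u) (d w) with hle | hle
    · refine ⟨S1, hc1, ?_⟩
      have h := arith_star (m : ℤ) (d u) (d w) (T : ℤ) (S1.card : ℤ)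
        (by exact_mod_cast hdsum) (by exact_mod_cast hdu1) (by exact_mod_cast hle)
        (by exact_mod_cast hTbound) (by exact_mod_cast hs1)
      exact_mod_cast h
    · refine ⟨S2, hc2, ?_⟩
      have h := arith_star (m : ℤ) (d w) (d u) (T : ℤ) (S2.card : ℤ)
        (by push_cast; push_cast at hdsum; linarith) (by exact_mod_cast hdw1')
        (by exact_mod_cast hle)
        (by push_cast; push_cast at hTbound; linarith) (by exact_mod_cast hs2)
      exact_mod_cast h
  -- non-star case: at least one edge not touching {u, w}
  · have ht1 : 1 ≤ B.card := Nat.one_le_iff_ne_zero.mpr ht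
    set S := insert u (insert w (B.image (fun e => (Quot.out e).1))) with hS
    refine ⟨S, ?_, ?_⟩
    · intro e heC'
      by_cases hu : u ∈ e
      · exact ⟨u, Finset.mem_insert_self _ _, hu⟩
      by_cases hw : w ∈ e
      · exact ⟨w, Finset.mem_insert_of_mem (Finset.mem_insert_self _ _), hw⟩
      have heB : e ∈ B := Finset.mem_filter.mpr ⟨heC', by tauto⟩
      exact ⟨(Quot.out e).1, Finset.mem_insert_of_mem (Finset.mem_insert_of_mem
        (Finset.mem_image_of_mem _ heB)), Sym2.out_fst_mem e⟩
    · have hcS : S.card ≤ 2 + B.card := by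
        calc S.card ≤ (insert w (B.image (fun e => (Quot.out e).1))).card + 1 :=
            Finset.card_insert_le _ _
          _ ≤ (B.image (fun e => (Quot.out e).1)).card + 1 + 1 := by
            have h := Finset.card_insert_le w (B.image (fun e => (Quot.out e).1))
            omega
          _ ≤ 2 + B.card := by
            have h := Finset.card_image_le (s := B) (f := fun e => (Quot.out e).1)
            omega
      have h := arith_nonstar (m : ℤ) ((d u + d w : ℕ) : ℤ) (T : ℤ) (S.card : ℤ)
        (B.card : ℤ)
        (by push_cast; push_cast at hAcard hAB; linarith) (by exact_mod_cast ht1)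
        (by exact_mod_cast hTle) (by exact_mod_cast hcS) (by positivity)
      exact_mod_cast h

lemma cluster_cover_real (G : SimpleGraph (Fin n)) [DecidableRel G.Adj] (hG : G.CliqueFree 3)
    (C : Finset (Sym2 (Fin n))) (hC : C ⊆ G.edgeFinset) (c : EuclideanSpace ℝ (Fin n)) :
    ∃ S : Finset (Fin n), (∀ e ∈ C, ∃ v ∈ S, v ∈ e) ∧
      (S.card : ℝ) ≤ 1 + 3 * ((∑ e ∈ C, ‖edgePoint e - c‖^2) - C.card + 1) := by
  rcases C.eq_empty_or_nonempty with rfl | hne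
  · exact ⟨∅, by simp, by norm_num⟩
  have hnd : ∀ e ∈ C, ¬ e.IsDiag := fun e he =>
    G.not_isDiag_of_mem_edgeSet (SimpleGraph.mem_edgeFinset.mp (hC he))
  obtain ⟨S, hcov, hineq⟩ := cluster_cover G hG C hC
  refine ⟨S, hcov, ?_⟩
  have hm : (1:ℝ) ≤ C.card := by exact_mod_cast Finset.card_pos.mpr hne
  have h1 : (S.card : ℝ) * C.card + 3 * ∑ v : Fin n, (((C.filter (fun e => v ∈ e)).card : ℝ))^2
      ≤ C.card + 3 * C.card * (C.card + 1) := by exact_mod_cast hineq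
  have h2 := cost_bound C hnd c
  set m := (C.card : ℝ)
  set T := ∑ v : Fin n, (((C.filter (fun e => v ∈ e)).card : ℝ))^2
  set cost := ∑ e ∈ C, ‖edgePoint e - c‖^2
  have h3 : (S.card:ℝ) * m ≤ (1 + 3 * (cost - m + 1)) * m := by nlinarith [h1, h2, hm]
  exact le_of_mul_le_mul_right h3 (by linarith)

end VCKMeans

/-- If a triangle-free simple graph `G` on `{1,…,n}` with `m` edges admits `k ≥ 1` centers
`c_1, …, c_k ∈ ℝ^n` of k-means cost `∑_{e∈E} min_i ‖x_e − c_i‖² ≤ m − (1 − δ)·k` for some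
`0 ≤ δ ≤ 1`, then `G` has a vertex cover of size at most `(1 + 3δ)·k`. -/
theorem vertexCover_of_cheap_kmeans {n : ℕ} (G : SimpleGraph (Fin n))
    [DecidableRel G.Adj] (hG : G.CliqueFree 3)
    (δ : ℝ) (hδ0 : 0 ≤ δ) (hδ1 : δ ≤ 1) (k : ℕ) (hk : 1 ≤ k)
    (c : Fin k → EuclideanSpace ℝ (Fin n))
    (hcost : ∑ e ∈ G.edgeFinset,
        (Finset.univ.inf' ⟨⟨0, hk⟩, Finset.mem_univ _⟩
          fun i : Fin k => ‖edgePoint e - c i‖ ^ 2)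
      ≤ (G.edgeFinset.card : ℝ) - (1 - δ) * k) :
    ∃ S : Finset (Fin n), IsVertexCover G S ∧ (S.card : ℝ) ≤ (1 + 3 * δ) * k := by
  classical
  -- assign each edge to a closest center
  have hex : ∀ e : Sym2 (Fin n), ∃ i : Fin k,
      (Finset.univ.inf' ⟨⟨0, hk⟩, Finset.mem_univ _⟩
        fun i : Fin k => ‖edgePoint e - c i‖ ^ 2) = ‖edgePoint e - c i‖ ^ 2 := by
    intro e
    obtain ⟨i, -, hi⟩ := Finset.exists_mem_eq_inf' (⟨⟨0, hk⟩, Finset.mem_univ _⟩ :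
      (Finset.univ : Finset (Fin k)).Nonempty) (fun i : Fin k => ‖edgePoint e - c i‖ ^ 2)
    exact ⟨i, hi⟩
  choose σ hσ using hex
  set Cl : Fin k → Finset (Sym2 (Fin n)) :=
    fun i => G.edgeFinset.filter (fun e => σ e = i) with hCl
  have hClsub : ∀ i, Cl i ⊆ G.edgeFinset := fun i => Finset.filter_subset _ _
  -- total cost decomposes over clusters
  have hdecomp : ∑ e ∈ G.edgeFinset,
      (Finset.univ.inf' ⟨⟨0, hk⟩, Finset.mem_univ _⟩
        fun i : Fin k => ‖edgePoint e - c i‖ ^ 2)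
      = ∑ i : Fin k, ∑ e ∈ Cl i, ‖edgePoint e - c i‖ ^ 2 := by
    rw [Finset.sum_congr rfl (fun e (_ : e ∈ G.edgeFinset) => hσ e)]
    rw [← Finset.sum_fiberwise_of_maps_to (fun e _ => Finset.mem_univ (σ e))
      (fun e => ‖edgePoint e - c (σ e)‖ ^ 2)]
    refine Finset.sum_congr rfl fun i _ => Finset.sum_congr rfl fun e he => ?_
    rw [Finset.mem_filter] at he
    rw [he.2]
  have hmsum : G.edgeFinset.card = ∑ i : Fin k, (Cl i).card :=
    Finset.card_eq_sum_card_fiberwise (fun e _ => Finset.mem_univ (σ e))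
  -- per-cluster covers
  have hcl : ∀ i : Fin k, ∃ S : Finset (Fin n), (∀ e ∈ Cl i, ∃ v ∈ S, v ∈ e) ∧
      (S.card : ℝ) ≤ 1 + 3 * ((∑ e ∈ Cl i, ‖edgePoint e - c i‖^2) - (Cl i).card + 1) :=
    fun i => VCKMeans.cluster_cover_real G hG (Cl i) (hClsub i) (c i)
  choose S hScov hScard using hcl
  refine ⟨Finset.univ.biUnion S, ?_, ?_⟩
  · intro u v huv
    have he : s(u,v) ∈ G.edgeFinset := SimpleGraph.mem_edgeFinset.mpr
      (G.mem_edgeSet.mpr huv)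
    have heCl : s(u,v) ∈ Cl (σ s(u,v)) := Finset.mem_filter.mpr ⟨he, rfl⟩
    obtain ⟨x, hxS, hxe⟩ := hScov _ _ heCl
    have hxU : x ∈ Finset.univ.biUnion S :=
      Finset.mem_biUnion.mpr ⟨σ s(u,v), Finset.mem_univ _, hxS⟩
    rw [Sym2.mem_iff] at hxe
    rcases hxe with rfl | rfl
    · exact Or.inl hxU
    · exact Or.inr hxU
  · have h1 : ((Finset.univ.biUnion S).card : ℝ) ≤ ∑ i : Fin k, ((S i).card : ℝ) := by
      have := Finset.card_biUnion_le (s := (Finset.univ : Finset (Fin k))) (t := S)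
      exact_mod_cast this
    have h2 : ∑ i : Fin k, ((S i).card : ℝ)
        ≤ ∑ i : Fin k, (1 + 3 * ((∑ e ∈ Cl i, ‖edgePoint e - c i‖^2) - (Cl i).card + 1)) :=
      Finset.sum_le_sum fun i _ => hScard i
    have h3 : ∑ i : Fin k, ((1:ℝ) + 3 * ((∑ e ∈ Cl i, ‖edgePoint e - c i‖^2) - (Cl i).card + 1))
        = k + 3 * ((∑ i : Fin k, ∑ e ∈ Cl i, ‖edgePoint e - c i‖^2)
            - (∑ i : Fin k, ((Cl i).card : ℝ)) + k) := by
      rw [Finset.sum_add_distrib, Finset.sum_const, Finset.card_univ, Fintype.card_fin]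
      rw [← Finset.mul_sum, Finset.sum_add_distrib, Finset.sum_sub_distrib,
        Finset.sum_const, Finset.card_univ, Fintype.card_fin]
      push_cast
      ring
    have hcost' : ∑ i : Fin k, ∑ e ∈ Cl i, ‖edgePoint e - c i‖^2
        ≤ (G.edgeFinset.card : ℝ) - (1 - δ) * k := by rw [← hdecomp]; exact hcost
    have hm' : (G.edgeFinset.card : ℝ) = ∑ i : Fin k, ((Cl i).card : ℝ) := by
      exact_mod_cast hmsum
    calc ((Finset.univ.biUnion S).card : ℝ)
        ≤ ∑ i : Fin k, ((S i).card : ℝ) := h1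
      _ ≤ k + 3 * ((∑ i : Fin k, ∑ e ∈ Cl i, ‖edgePoint e - c i‖^2)
            - (∑ i : Fin k, ((Cl i).card : ℝ)) + k) := by rw [← h3]; exact h2
      _ ≤ (1 + 3 * δ) * k := by
        rw [← hm']
        nlinarith [hcost']
end

section
/- Let F be a nonempty finite set of m edges of a finite simple graph with vertex degrees d_u, and define δ by (1/m)·∑_u d_u² = m + 1 − δ. If δ < 1/2, then δ = 0 (i.e., ∑_u d_u² = m·(m + 1)) and F is either a star (all edges of F share a common vertex) or a triangle (three edges forming a 3-cycle). -/
namespace StarTriangleAux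

open Finset

set_option linter.unusedSectionVars false

lemma grid {V : Type*} {a b c d x1 x2 x3 y1 y2 y3 : V}
    (hab : a ≠ b) (hcd : c ≠ d)
    (hx1 : x1 = a ∨ x1 = b) (hx2 : x2 = a ∨ x2 = b) (hx3 : x3 = a ∨ x3 = b)
    (hy1 : y1 = c ∨ y1 = d) (hy2 : y2 = c ∨ y2 = d) (hy3 : y3 = c ∨ y3 = d)
    (s12 : x1 = x2 ∨ y1 = y2) (s13 : x1 = x3 ∨ y1 = y3) (s23 : x2 = x3 ∨ y2 = y3)
    (n12 : ¬(x1 = x2 ∧ y1 = y2)) (n13 : ¬(x1 = x3 ∧ y1 = y3))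
    (n23 : ¬(x2 = x3 ∧ y2 = y3)) : False := by
  rcases hx1 with rfl | rfl <;> rcases hy1 with rfl | rfl <;>
  rcases hx2 with rfl | rfl <;> rcases hy2 with rfl | rfl <;>
  rcases hx3 with rfl | rfl <;> rcases hy3 with rfl | rfl <;> simp_all

variable {V : Type*} [DecidableEq V] [Fintype V]

lemma exists_pair_eq (e : Sym2 V) : ∃ a b, e = s(a, b) :=
  Sym2.ind (fun a b => ⟨a, b, rfl⟩) e

lemma eq_mk_of_mem {e : Sym2 V} {u v : V} (hu : u ∈ e) (hv : v ∈ e)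
    (huv : u ≠ v) : e = s(u, v) := by
  induction e using Sym2.ind with
  | _ a b =>
    rw [Sym2.mem_iff] at hu hv
    rcases hu with rfl | rfl <;> rcases hv with rfl | rfl <;>
      first
        | exact absurd rfl huv
        | rfl
        | rw [Sym2.eq_swap]

lemma exists_other {e : Sym2 V} (he : ¬ e.IsDiag) {u : V} (hu : u ∈ e) :
    ∃ v, v ≠ u ∧ e = s(u, v) := by
  induction e using Sym2.ind with
  | _ a b =>
    have hab : a ≠ b := by simpa using he
    rw [Sym2.mem_iff] at hu
    rcases hu with rfl | rfl
    · exact ⟨b, hab.symm, rfl⟩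
    · exact ⟨a, hab, Sym2.eq_swap⟩

lemma card_mem_eq_two {e : Sym2 V} (he : ¬ e.IsDiag) :
    (univ.filter (fun u => u ∈ e)).card = 2 := by
  induction e using Sym2.ind with
  | _ a b =>
    have hab : a ≠ b := by simpa using he
    have : univ.filter (fun u => u ∈ s(a, b)) = {a, b} := by
      ext u; simp [Sym2.mem_iff]
    rw [this, card_insert_of_notMem (by simpa using hab), card_singleton]

lemma key (F : Finset (Sym2 V)) (hsimple : ∀ e ∈ F, ¬ e.IsDiag) :
    (∑ u : V, (degIn F u) ^ 2) +
      (∑ e ∈ F, ∑ f ∈ F, if (∃ u, u ∈ e ∧ u ∈ f) then 0 else 1)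
      = F.card ^ 2 + F.card := by
  have h1 : ∑ u : V, (degIn F u) ^ 2
      = ∑ e ∈ F, ∑ f ∈ F, (univ.filter (fun u => u ∈ e ∧ u ∈ f)).card := by
    have hdeg : ∀ u : V, degIn F u = ∑ e ∈ F, if u ∈ e then 1 else 0 := by
      intro u; rw [degIn, Finset.card_filter]
    calc ∑ u : V, (degIn F u) ^ 2
        = ∑ u : V, ∑ e ∈ F, ∑ f ∈ F,
            ((if u ∈ e then 1 else 0) * (if u ∈ f then 1 else 0)) := by
          simp_rw [hdeg, sq, Finset.sum_mul_sum]
      _ = ∑ e ∈ F, ∑ f ∈ F, ∑ u : V,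
            ((if u ∈ e then 1 else 0) * (if u ∈ f then 1 else 0)) := by
          rw [Finset.sum_comm]
          exact Finset.sum_congr rfl (fun e _ => Finset.sum_comm)
      _ = ∑ e ∈ F, ∑ f ∈ F, (univ.filter (fun u => u ∈ e ∧ u ∈ f)).card := by
          refine Finset.sum_congr rfl (fun e _ => Finset.sum_congr rfl (fun f _ => ?_))
          rw [Finset.card_filter]
          refine Finset.sum_congr rfl (fun u _ => ?_)
          by_cases h1 : u ∈ e <;> by_cases h2 : u ∈ f <;> simp [h1, h2]
  rw [h1, ← Finset.sum_add_distrib]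
  have h2 : ∀ e ∈ F, (∑ f ∈ F, (univ.filter (fun u => u ∈ e ∧ u ∈ f)).card)
      + (∑ f ∈ F, if (∃ u, u ∈ e ∧ u ∈ f) then 0 else 1)
      = ∑ f ∈ F, (1 + if e = f then 1 else 0) := by
    intro e he
    rw [← Finset.sum_add_distrib]
    refine Finset.sum_congr rfl (fun f hf => ?_)
    by_cases hm : ∃ u, u ∈ e ∧ u ∈ f
    · obtain ⟨u, hu1, hu2⟩ := hm
      rw [if_pos ⟨u, hu1, hu2⟩]
      by_cases hef : e = f
      · subst hef
        rw [if_pos rfl]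
        have heq : univ.filter (fun v => v ∈ e ∧ v ∈ e) = univ.filter (fun v => v ∈ e) := by
          ext v; simp
        rw [heq, card_mem_eq_two (hsimple e he)]
      · rw [if_neg hef]
        have heq : univ.filter (fun v => v ∈ e ∧ v ∈ f) = {u} := by
          ext v
          simp only [mem_filter, mem_univ, true_and, mem_singleton]
          constructor
          · rintro ⟨hv1, hv2⟩
            by_contra hvu
            have h1 : e = s(v, u) := eq_mk_of_mem hv1 hu1 hvu
            have h2 : f = s(v, u) := eq_mk_of_mem hv2 hu2 hvu
            exact hef (h1.trans h2.symm)
          · rintro rfl; exact ⟨hu1, hu2⟩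
        rw [heq, card_singleton]
    · rw [if_neg hm]
      have h0 : univ.filter (fun v => v ∈ e ∧ v ∈ f) = ∅ := by
        ext v
        simp only [mem_filter, mem_univ, true_and, Finset.notMem_empty, iff_false]
        exact fun hv => hm ⟨v, hv⟩
      have hef : e ≠ f := by
        rintro rfl
        obtain ⟨a, b, rfl⟩ := exists_pair_eq e
        exact hm ⟨a, by simp, by simp⟩
      rw [h0, if_neg hef]
      simp
  rw [Finset.sum_congr rfl h2]
  simp_rw [Finset.sum_add_distrib, Finset.sum_const, Finset.sum_ite_eq, smul_eq_mul, mul_one]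
  rw [Finset.sum_ite_mem, Finset.inter_self, Finset.sum_const, smul_eq_mul, mul_one]
  ring

/-- at most 2 edges of `F` can meet every edge of `F`, given a disjoint pair exists -/
lemma U_le_two (F : Finset (Sym2 V)) (hsimple : ∀ e ∈ F, ¬ e.IsDiag)
    {e f : Sym2 V} (he : e ∈ F) (hf : f ∈ F) (hd : ¬ ∃ u, u ∈ e ∧ u ∈ f) :
    (F.filter (fun g => ∀ h ∈ F, ∃ u, u ∈ g ∧ u ∈ h)).card ≤ 2 := by
  by_contra hU
  push_neg at hU
  rw [Finset.two_lt_card_iff] at hU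
  obtain ⟨g1, g2, g3, hg1, hg2, hg3, h12, h13, h23⟩ := hU
  rw [Finset.mem_filter] at hg1 hg2 hg3
  push_neg at hd
  have struct : ∀ g, g ∈ F → (∀ h ∈ F, ∃ u, u ∈ g ∧ u ∈ h) →
      ∃ x y, x ∈ e ∧ y ∈ f ∧ g = s(x, y) := by
    intro g hgF hmeet
    obtain ⟨x, hxg, hxe⟩ := hmeet e he
    obtain ⟨y, hyg, hyf⟩ := hmeet f hf
    have hxy : x ≠ y := by rintro rfl; exact hd x hxe hyf
    exact ⟨x, y, hxe, hyf, eq_mk_of_mem hxg hyg hxy⟩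
  obtain ⟨x1, y1, hx1, hy1, e1⟩ := struct g1 hg1.1 hg1.2
  obtain ⟨x2, y2, hx2, hy2, e2⟩ := struct g2 hg2.1 hg2.2
  obtain ⟨x3, y3, hx3, hy3, e3⟩ := struct g3 hg3.1 hg3.2
  have share : ∀ (x y x' y' : V), x ∈ e → y ∈ f → x' ∈ e → y' ∈ f →
      (∃ u, u ∈ s(x, y) ∧ u ∈ s(x', y')) → x = x' ∨ y = y' := by
    rintro x y x' y' hx hy hx' hy' ⟨u, hu1, hu2⟩
    rw [Sym2.mem_iff] at hu1 hu2
    rcases hu1 with rfl | rfl <;> rcases hu2 with h | h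
    · exact Or.inl h
    · exact absurd (h ▸ hy') (fun hh => hd u hx hh)
    · exact absurd (h ▸ hx') (fun hh => hd u hh hy)
    · exact Or.inr h
  have s12 : x1 = x2 ∨ y1 = y2 := share _ _ _ _ hx1 hy1 hx2 hy2 (e1 ▸ e2 ▸ hg1.2 g2 hg2.1)
  have s13 : x1 = x3 ∨ y1 = y3 := share _ _ _ _ hx1 hy1 hx3 hy3 (e1 ▸ e3 ▸ hg1.2 g3 hg3.1)
  have s23 : x2 = x3 ∨ y2 = y3 := share _ _ _ _ hx2 hy2 hx3 hy3 (e2 ▸ e3 ▸ hg2.2 g3 hg3.1)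
  have n12 : ¬ (x1 = x2 ∧ y1 = y2) := by
    rintro ⟨rfl, rfl⟩; exact h12 (e1.trans e2.symm)
  have n13 : ¬ (x1 = x3 ∧ y1 = y3) := by
    rintro ⟨rfl, rfl⟩; exact h13 (e1.trans e3.symm)
  have n23 : ¬ (x2 = x3 ∧ y2 = y3) := by
    rintro ⟨rfl, rfl⟩; exact h23 (e2.trans e3.symm)
  obtain ⟨a, b, rfl⟩ := exists_pair_eq e
  obtain ⟨c, d, rfl⟩ := exists_pair_eq f
  rw [Sym2.mem_iff] at hx1 hx2 hx3 hy1 hy2 hy3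
  have hab : a ≠ b := by simpa using hsimple _ he
  have hcd : c ≠ d := by simpa using hsimple _ hf
  exact grid hab hcd hx1 hx2 hx3 hy1 hy2 hy3 s12 s13 s23 n12 n13 n23

lemma main_bound (F : Finset (Sym2 V)) (hsimple : ∀ e ∈ F, ¬ e.IsDiag)
    {e f : Sym2 V} (he : e ∈ F) (hf : f ∈ F) (hd : ¬ ∃ u, u ∈ e ∧ u ∈ f) :
    F.card ≤ 2 * ∑ g ∈ F, ∑ h ∈ F, (if (∃ u, u ∈ g ∧ u ∈ h) then 0 else 1) := by
  set P := ∑ g ∈ F, ∑ h ∈ F, (if (∃ u, u ∈ g ∧ u ∈ h) then 0 else 1) with hP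
  have hU2 : (F.filter (fun g => ∀ h ∈ F, ∃ u, u ∈ g ∧ u ∈ h)).card ≤ 2 :=
    U_le_two F hsimple he hf hd
  have hef : e ≠ f := by
    rintro rfl
    obtain ⟨a, b, rfl⟩ := exists_pair_eq e
    exact hd ⟨a, by simp, by simp⟩
  have hc1 : ∀ g ∈ F \ F.filter (fun g => ∀ h ∈ F, ∃ u, u ∈ g ∧ u ∈ h),
      1 ≤ ∑ h ∈ F, (if (∃ u, u ∈ g ∧ u ∈ h) then 0 else 1) := by
    intro g hg
    rw [Finset.mem_sdiff, Finset.mem_filter] at hg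
    obtain ⟨hgF, hgU⟩ := hg
    have : ∃ h ∈ F, ¬ ∃ u, u ∈ g ∧ u ∈ h := by
      by_contra hcon; push_neg at hcon; exact hgU ⟨hgF, hcon⟩
    obtain ⟨h, hhF, hh⟩ := this
    calc 1 = (if (∃ u, u ∈ g ∧ u ∈ h) then 0 else 1) := by rw [if_neg hh]
    _ ≤ ∑ h ∈ F, (if (∃ u, u ∈ g ∧ u ∈ h) then 0 else 1) :=
        Finset.single_le_sum (f := fun h => if (∃ u, u ∈ g ∧ u ∈ h) then 0 else 1)
          (fun _ _ => Nat.zero_le _) hhF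
  have hPm : F.card ≤ P + 2 := by
    have h1 : (F \ F.filter (fun g => ∀ h ∈ F, ∃ u, u ∈ g ∧ u ∈ h)).card
        ≤ ∑ g ∈ F \ F.filter (fun g => ∀ h ∈ F, ∃ u, u ∈ g ∧ u ∈ h),
            ∑ h ∈ F, (if (∃ u, u ∈ g ∧ u ∈ h) then 0 else 1) := by
      simpa using Finset.sum_le_sum hc1
    have h2 : ∑ g ∈ F \ F.filter (fun g => ∀ h ∈ F, ∃ u, u ∈ g ∧ u ∈ h),
        ∑ h ∈ F, (if (∃ u, u ∈ g ∧ u ∈ h) then 0 else 1) ≤ P :=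
      Finset.sum_le_sum_of_subset (Finset.sdiff_subset)
    have h3 : (F \ F.filter (fun g => ∀ h ∈ F, ∃ u, u ∈ g ∧ u ∈ h)).card
        + (F.filter (fun g => ∀ h ∈ F, ∃ u, u ∈ g ∧ u ∈ h)).card = F.card :=
      Finset.card_sdiff_add_card_eq_card (Finset.filter_subset _ _)
    omega
  have hP2 : 2 ≤ P := by
    have hce : 1 ≤ ∑ h ∈ F, (if (∃ u, u ∈ e ∧ u ∈ h) then 0 else 1) := by
      calc 1 = (if (∃ u, u ∈ e ∧ u ∈ f) then 0 else 1) := by rw [if_neg hd]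
      _ ≤ _ := Finset.single_le_sum (f := fun h => if (∃ u, u ∈ e ∧ u ∈ h) then 0 else 1)
          (fun _ _ => Nat.zero_le _) hf
    have hcf : 1 ≤ ∑ h ∈ F, (if (∃ u, u ∈ f ∧ u ∈ h) then 0 else 1) := by
      have hd' : ¬ ∃ u, u ∈ f ∧ u ∈ e := by
        rintro ⟨u, h1, h2⟩; exact hd ⟨u, h2, h1⟩
      calc 1 = (if (∃ u, u ∈ f ∧ u ∈ e) then 0 else 1) := by rw [if_neg hd']
      _ ≤ _ := Finset.single_le_sum (f := fun h => if (∃ u, u ∈ f ∧ u ∈ h) then 0 else 1)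
          (fun _ _ => Nat.zero_le _) he
    have : ∑ g ∈ ({e, f} : Finset (Sym2 V)), ∑ h ∈ F, (if (∃ u, u ∈ g ∧ u ∈ h) then 0 else 1) ≤ P :=
      Finset.sum_le_sum_of_subset (by intro g hg; simp at hg; rcases hg with rfl | rfl <;> assumption)
    rw [Finset.sum_pair hef] at this
    omega
  omega

lemma star_or_tri (F : Finset (Sym2 V)) (hF : F.Nonempty)
    (hsimple : ∀ e ∈ F, ¬ e.IsDiag)
    (hint : ∀ g ∈ F, ∀ h ∈ F, ∃ u, u ∈ g ∧ u ∈ h) :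
    (∃ v : V, ∀ e ∈ F, v ∈ e) ∨
      (∃ u v w : V, u ≠ v ∧ v ≠ w ∧ u ≠ w ∧
        F = {s(u, v), s(v, w), s(w, u)}) := by
  obtain ⟨e, he⟩ := hF
  obtain ⟨a, b, rfl⟩ := exists_pair_eq e
  have hab : a ≠ b := by simpa using hsimple _ he
  by_cases hsa : ∀ g ∈ F, a ∈ g
  · exact Or.inl ⟨a, hsa⟩
  by_cases hsb : ∀ g ∈ F, b ∈ g
  · exact Or.inl ⟨b, hsb⟩
  push_neg at hsa hsb
  obtain ⟨f, hfF, haf⟩ := hsa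
  obtain ⟨g, hgF, hbg⟩ := hsb
  have hbf : b ∈ f := by
    obtain ⟨u, huf, hue⟩ := hint f hfF s(a, b) he
    rw [Sym2.mem_iff] at hue
    rcases hue with rfl | rfl
    · exact absurd huf haf
    · exact huf
  have hag : a ∈ g := by
    obtain ⟨u, hug, hue⟩ := hint g hgF s(a, b) he
    rw [Sym2.mem_iff] at hue
    rcases hue with rfl | rfl
    · exact hug
    · exact absurd hug hbg
  obtain ⟨c, hcb, hfeq⟩ := exists_other (hsimple f hfF) hbf
  obtain ⟨d, hda, hgeq⟩ := exists_other (hsimple g hgF) hag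
  have hca : c ≠ a := by rintro rfl; exact haf (hfeq ▸ by simp)
  have hdb : d ≠ b := by rintro rfl; exact hbg (hgeq ▸ by simp)
  have hcd : c = d := by
    obtain ⟨v, hvf, hvg⟩ := hint f hfF g hgF
    rw [hfeq, Sym2.mem_iff] at hvf
    rw [hgeq, Sym2.mem_iff] at hvg
    rcases hvf with rfl | rfl <;> rcases hvg with h | h <;> simp_all
  subst hcd
  refine Or.inr ⟨a, b, c, hab, hcb.symm, hca.symm, ?_⟩
  apply Finset.Subset.antisymm
  · intro h hh
    obtain ⟨x, y, rfl⟩ := exists_pair_eq h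
    have hxy : x ≠ y := by simpa using hsimple _ hh
    obtain ⟨p, hph, hpe⟩ := hint s(x, y) hh s(a, b) he
    obtain ⟨q, hqh, hqf⟩ := hint s(x, y) hh f hfF
    obtain ⟨r, hrh, hrg⟩ := hint s(x, y) hh g hgF
    rw [hfeq] at hqf
    rw [hgeq] at hrg
    rw [Sym2.mem_iff] at hph hpe hqh hqf hrh hrg
    simp only [Finset.mem_insert, Finset.mem_singleton, Sym2.eq_iff]
    clear hint hsimple he hh hfF hgF haf hbg hbf hag hfeq hgeq hda hdb
    rcases hph with h1 | h1 <;> rcases hpe with h2 | h2 <;>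
      rcases hqh with h3 | h3 <;> rcases hqf with h4 | h4 <;>
      rcases hrh with h5 | h5 <;> rcases hrg with h6 | h6 <;>
      simp_all
  · intro h hh
    simp only [Finset.mem_insert, Finset.mem_singleton] at hh
    rcases hh with rfl | rfl | rfl
    · exact he
    · rwa [← hfeq]
    · rw [Sym2.eq_swap, ← hgeq]; exact hgF

end StarTriangleAux

open StarTriangleAux in
/-- Let `F` be a nonempty finite set of `m` edges of a finite simple graph with degrees `d_u`,
and define `δ` by `(1/m)·∑_u d_u² = m + 1 − δ`.  If `δ < 1/2` then `δ = 0` and `F` is either a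
star (all edges share a common vertex) or a triangle. -/
theorem star_or_triangle_of_small_delta {V : Type*} [Fintype V] [DecidableEq V]
    (F : Finset (Sym2 V)) (hF : F.Nonempty) (hsimple : ∀ e ∈ F, ¬ e.IsDiag)
    (δ : ℝ)
    (hδ : (F.card : ℝ)⁻¹ * ∑ u : V, (degIn F u : ℝ) ^ 2 = (F.card : ℝ) + 1 - δ)
    (hlt : δ < 1 / 2) :
    δ = 0 ∧
      ((∃ v : V, ∀ e ∈ F, v ∈ e) ∨
        (∃ u v w : V, u ≠ v ∧ v ≠ w ∧ u ≠ w ∧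
          F = {s(u, v), s(v, w), s(w, u)})) := by
  have hm : 0 < F.card := Finset.card_pos.mpr hF
  have hm' : (F.card : ℝ) ≠ 0 := by positivity
  set P := ∑ g ∈ F, ∑ h ∈ F, (if (∃ u, u ∈ g ∧ u ∈ h) then 0 else 1) with hPdef
  have hkey : (∑ u : V, (degIn F u) ^ 2) + P = F.card ^ 2 + F.card := key F hsimple
  -- real version
  have hNcast : (∑ u : V, ((degIn F u : ℝ)) ^ 2) = ((∑ u : V, (degIn F u) ^ 2 : ℕ) : ℝ) := by
    push_cast; ring
  have hkeyR : ((∑ u : V, (degIn F u) ^ 2 : ℕ) : ℝ) + (P : ℝ)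
      = (F.card : ℝ) ^ 2 + (F.card : ℝ) := by
    exact_mod_cast congrArg (Nat.cast : ℕ → ℝ) hkey
  have hδP : (P : ℝ) = (F.card : ℝ) * δ := by
    have h1 : (∑ u : V, ((degIn F u : ℝ)) ^ 2) = (F.card : ℝ) * ((F.card : ℝ) + 1 - δ) := by
      rw [← hδ]; field_simp
    rw [← hNcast, h1] at hkeyR
    linear_combination hkeyR
  have hP0 : P = 0 := by
    by_contra hPne
    have hdisj : ∃ e ∈ F, ∃ f ∈ F, ¬ ∃ u, u ∈ e ∧ u ∈ f := by
      by_contra hcon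
      push_neg at hcon
      apply hPne
      rw [hPdef]
      refine Finset.sum_eq_zero (fun g hg => Finset.sum_eq_zero (fun h hh => ?_))
      rw [if_pos (hcon g hg h hh)]
    obtain ⟨e, he, f, hf, hd⟩ := hdisj
    have hbound : F.card ≤ 2 * P := main_bound F hsimple he hf hd
    -- but 2 * P < F.card
    have hFpos : (0 : ℝ) < (F.card : ℝ) := by exact_mod_cast hm
    have h2P : ((2 * P : ℕ) : ℝ) < (F.card : ℝ) := by
      push_cast
      rw [hδP]
      nlinarith [mul_lt_mul_of_pos_left hlt hFpos]
    have : (F.card : ℝ) ≤ ((2 * P : ℕ) : ℝ) := by exact_mod_cast hbound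
    linarith
  have hδ0 : δ = 0 := by
    have hz : (F.card : ℝ) * δ = 0 := by rw [← hδP, hP0]; simp
    rcases mul_eq_zero.mp hz with h | h
    · exact absurd h hm'
    · exact h
  refine ⟨hδ0, ?_⟩
  have hint : ∀ g ∈ F, ∀ h ∈ F, ∃ u, u ∈ g ∧ u ∈ h := by
    intro g hg h hh
    by_contra hcon
    have : (1 : ℕ) ≤ P := by
      rw [hPdef]
      calc (1 : ℕ) = (if (∃ u, u ∈ g ∧ u ∈ h) then 0 else 1) := by rw [if_neg hcon]
      _ ≤ ∑ h ∈ F, (if (∃ u, u ∈ g ∧ u ∈ h) then 0 else 1) :=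
          Finset.single_le_sum (f := fun h => if (∃ u, u ∈ g ∧ u ∈ h) then 0 else 1)
            (fun _ _ => Nat.zero_le _) hh
      _ ≤ _ := Finset.single_le_sum
            (f := fun g => ∑ h ∈ F, (if (∃ u, u ∈ g ∧ u ∈ h) then 0 else 1))
            (fun _ _ => Nat.zero_le _) hg
    omega
  exact star_or_tri F hF hsimple hint
end

section
/- Let H be a finite simple d-regular graph (d ≥ 1) on an N-element vertex set with adjacency matrix A_H satisfying the spectral radius bound: |pᵀ A_H p| ≤ ρ·‖p‖² for every vector p ∈ ℝ^N orthogonal to the all-ones vector. Let G be a finite simple graph with maximum degree at most Δ. Then N · IS(G) ≥ (1 − ρΔ/(2d)) · IS(G ⊗ H). -/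
open Finset Matrix

/-- The tensor (Kronecker) product of two simple graphs. -/
def tensorProd {V U : Type*} (G : SimpleGraph V) (H : SimpleGraph U) :
    SimpleGraph (V × U) where
  Adj a b := G.Adj a.1 b.1 ∧ H.Adj a.2 b.2
  symm := ⟨fun _ _ h => ⟨h.1.symm, h.2.symm⟩⟩
  loopless := ⟨fun a h => G.loopless.irrefl a.1 h.1⟩

/-- `I` is an independent set of `G`: no two of its vertices are adjacent. -/
def IsIndepSet {V : Type*} (G : SimpleGraph V) (I : Finset V) : Prop :=
  ∀ u ∈ I, ∀ v ∈ I, ¬ G.Adj u v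

/-- `IS(G)`: the maximum size of an independent set of `G`. -/
noncomputable def indepNum (V : Type*) [Fintype V] (G : SimpleGraph V) : ℕ :=
  sSup {k | ∃ I : Finset V, IsIndepSet G I ∧ I.card = k}

section aux
variable {V : Type*} [Fintype V] [DecidableEq V] (G : SimpleGraph V) [DecidableRel G.Adj]

lemma bdd : BddAbove {k | ∃ I : Finset V, IsIndepSet G I ∧ I.card = k} := by
  refine ⟨Fintype.card V, fun k hk => ?_⟩
  obtain ⟨I, -, rfl⟩ := hk
  exact I.card_le_univ

lemma indep_card_le (S : Finset V) (h : IsIndepSet G S) : S.card ≤ indepNum V G :=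
  le_csSup (bdd G) ⟨S, h, rfl⟩

lemma exists_max_indep : ∃ I : Finset V, IsIndepSet G I ∧ I.card = indepNum V G := by
  have h := Nat.sSup_mem (s := {k | ∃ I : Finset V, IsIndepSet G I ∧ I.card = k})
    ⟨0, ∅, fun u hu => by simp at hu, by simp⟩ (bdd G)
  exact h

lemma two_card_le (S : Finset V) :
    2 * S.card ≤ 2 * indepNum V G + ((S ×ˢ S).filter fun p => G.Adj p.1 p.2).card := by
  induction S using Finset.strongInduction with
  | _ S ih =>
    by_cases hS : IsIndepSet G S
    · have := indep_card_le G S hS; omega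
    · simp only [IsIndepSet, not_forall] at hS
      obtain ⟨u, hu, v, hv, hadj⟩ := hS
      rw [not_not] at hadj
      have hne : u ≠ v := G.ne_of_adj hadj
      have key : ((S ×ˢ S).filter fun p => G.Adj p.1 p.2).card ≥
          (((S.erase u) ×ˢ (S.erase u)).filter fun p => G.Adj p.1 p.2).card + 2 := by
        have hsub : ((S.erase u) ×ˢ (S.erase u)).filter (fun p => G.Adj p.1 p.2) ⊆
            (((S ×ˢ S).filter fun p => G.Adj p.1 p.2) \ {(u,v),(v,u)}) := by
          intro p hp
          simp only [mem_filter, mem_product, mem_erase, mem_sdiff, mem_insert,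
            mem_singleton] at hp ⊢
          refine ⟨⟨⟨hp.1.1.2, hp.1.2.2⟩, hp.2⟩, ?_⟩
          rintro (rfl | rfl)
          · exact hp.1.1.1 rfl
          · exact hp.1.2.1 rfl
        have hcard := Finset.card_le_card hsub
        have hmem : {(u,v),(v,u)} ⊆ (S ×ˢ S).filter fun p => G.Adj p.1 p.2 := by
          intro p hp
          simp only [mem_insert, mem_singleton] at hp
          rcases hp with rfl | rfl <;>
            simp [mem_filter, mem_product, hu, hv, hadj, hadj.symm]
        have hpair : ({(u,v),(v,u)} : Finset (V × V)).card = 2 := by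
          rw [card_insert_of_notMem (by simp [hne]), card_singleton]
        have h2 := Finset.card_sdiff_of_subset hmem
        rw [hpair] at h2
        have h3 := Finset.card_le_card hmem
        rw [hpair] at h3
        omega
      have hlt : S.erase u ⊂ S := Finset.erase_ssubset hu
      have := ih _ hlt
      have hcard : (S.erase u).card = S.card - 1 := Finset.card_erase_of_mem hu
      have hpos : 1 ≤ S.card := Finset.card_pos.2 ⟨u, hu⟩
      omega
end aux

section frac
variable {V : Type*} [Fintype V] [DecidableEq V] (G : SimpleGraph V) [DecidableRel G.Adj]

noncomputable def fval (c : V → ℝ) : ℝ :=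
  ∑ v, c v - (1/2) * ∑ v, ∑ w, (if G.Adj v w then c v * c w else 0)

lemma fval_indicator (c : V → ℝ) (h01 : ∀ v, c v = 0 ∨ c v = 1) :
    fval G c ≤ indepNum V G := by
  classical
  set S : Finset V := univ.filter (fun v => c v = 1) with hS
  have hc1 : ∀ v ∈ S, c v = 1 := by intro v hv; simpa [hS] using hv
  have hc0 : ∀ v, v ∉ S → c v = 0 := by
    intro v hv
    rcases h01 v with h | h
    · exact h
    · exact absurd (by simp [hS, h]) hv
  have hsum : ∑ v, c v = (S.card : ℝ) := by
    rw [Finset.card_eq_sum_ones S, Nat.cast_sum]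
    rw [← Finset.sum_subset (Finset.subset_univ S) (fun v _ hv => hc0 v hv)]
    exact Finset.sum_congr rfl (fun v hv => by simp [hc1 v hv])
  have hquad : ∑ v, ∑ w, (if G.Adj v w then c v * c w else 0)
      = (((S ×ˢ S).filter fun p => G.Adj p.1 p.2).card : ℝ) := by
    rw [Finset.card_filter, Finset.sum_product, Nat.cast_sum]
    rw [← Finset.sum_subset (Finset.subset_univ S) (fun v _ hv => by
      apply Finset.sum_eq_zero; intro w _; simp [hc0 v hv])]
    apply Finset.sum_congr rfl
    intro v hv
    rw [Nat.cast_sum]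
    rw [← Finset.sum_subset (Finset.subset_univ S) (fun w _ hw => by simp [hc0 w hw])]
    apply Finset.sum_congr rfl
    intro w hw
    simp [hc1 v hv, hc1 w hw]
  have hkey := two_card_le G S
  have hkey' : 2 * (S.card : ℝ) ≤ 2 * (indepNum V G : ℝ)
      + (((S ×ˢ S).filter fun p => G.Adj p.1 p.2).card : ℝ) := by
    exact_mod_cast hkey
  rw [fval, hsum, hquad]
  linarith

lemma fval_update (c : V → ℝ) (a : V) (t : ℝ) :
    fval G (Function.update c a t)
      = fval G (Function.update c a 0) + t * (1 - ∑ w, if G.Adj a w then c w else 0) := by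
  classical
  set ct := Function.update c a t with hct
  set c0 := Function.update c a 0 with hc0
  have hlin : ∑ v, ct v = ∑ v, c0 v + t := by
    rw [hct, hc0, Finset.sum_update_of_mem (Finset.mem_univ a),
      Finset.sum_update_of_mem (Finset.mem_univ a)]
    ring
  have hterm : ∀ v w, (if G.Adj v w then ct v * ct w else 0)
      = (if G.Adj v w then c0 v * c0 w else 0)
        + (if v = a then (if G.Adj a w then t * c w else 0) else 0)
        + (if w = a then (if G.Adj v a then c v * t else 0) else 0) := by
    intro v w
    by_cases hv : v = a <;> by_cases hw : w = a
    · subst hv; subst hw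
      simp [hct, hc0]
    · subst hv
      have hwa : ct w = c w := Function.update_of_ne hw _ _
      have hwa0 : c0 w = c w := Function.update_of_ne hw _ _
      simp [hct, hc0, hw, hwa, hwa0, Function.update_self]
    · subst hw
      have hva : ct v = c v := Function.update_of_ne hv _ _
      have hva0 : c0 v = c v := Function.update_of_ne hv _ _
      simp [hct, hc0, hv, hva, hva0, Function.update_self]
    · have h1 : ct v = c v := Function.update_of_ne hv _ _
      have h2 : ct w = c w := Function.update_of_ne hw _ _
      have h3 : c0 v = c v := Function.update_of_ne hv _ _
      have h4 : c0 w = c w := Function.update_of_ne hw _ _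
      simp [h1, h2, h3, h4, hv, hw]
  have hquad : ∑ v, ∑ w, (if G.Adj v w then ct v * ct w else 0)
      = ∑ v, ∑ w, (if G.Adj v w then c0 v * c0 w else 0)
        + 2 * t * ∑ w, (if G.Adj a w then c w else 0) := by
    have : ∀ v, ∑ w, (if G.Adj v w then ct v * ct w else 0)
        = ∑ w, ((if G.Adj v w then c0 v * c0 w else 0)
          + (if v = a then (if G.Adj a w then t * c w else 0) else 0)
          + (if w = a then (if G.Adj v a then c v * t else 0) else 0)) :=
      fun v => Finset.sum_congr rfl (fun w _ => hterm v w)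
    rw [Finset.sum_congr rfl (fun v _ => this v)]
    simp only [Finset.sum_add_distrib]
    have e1 : ∑ v, ∑ w, (if v = a then (if G.Adj a w then t * c w else 0) else 0)
        = ∑ w, (if G.Adj a w then t * c w else 0) := by
      rw [Finset.sum_comm]
      apply Finset.sum_congr rfl
      intro w _
      simp
    have e2 : ∑ v, ∑ w, (if w = a then (if G.Adj v a then c v * t else 0) else 0)
        = ∑ v, (if G.Adj v a then c v * t else 0) := by
      apply Finset.sum_congr rfl
      intro v _
      simp
    rw [e1, e2]
    have e3 : ∑ w, (if G.Adj a w then t * c w else 0) = t * ∑ w, (if G.Adj a w then c w else 0) := by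
      rw [Finset.mul_sum]
      apply Finset.sum_congr rfl
      intro w _
      split_ifs <;> ring
    have e4 : ∑ v, (if G.Adj v a then c v * t else 0) = t * ∑ w, (if G.Adj a w then c w else 0) := by
      rw [Finset.mul_sum]
      apply Finset.sum_congr rfl
      intro w _
      rw [if_congr (G.adj_comm w a) rfl rfl]
      split_ifs <;> ring
    rw [e3, e4]
    ring
  rw [fval, fval, hlin, hquad]
  ring

lemma fval_le (c : V → ℝ) (h0 : ∀ v, 0 ≤ c v) (h1 : ∀ v, c v ≤ 1) :
    fval G c ≤ indepNum V G := by
  classical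
  suffices h : ∀ T : Finset V, ∀ c : V → ℝ, (∀ v, 0 ≤ c v) → (∀ v, c v ≤ 1) →
      (∀ v, v ∉ T → c v = 0 ∨ c v = 1) → fval G c ≤ indepNum V G by
    exact h univ c h0 h1 (fun v hv => absurd (Finset.mem_univ v) hv)
  intro T
  induction T using Finset.induction with
  | empty =>
    intro c h0 h1 hout
    exact fval_indicator G c (fun v => hout v (Finset.notMem_empty v))
  | @insert a T ha ih =>
    intro c h0 h1 hout
    have hc : c = Function.update c a (c a) := (Function.update_eq_self a c).symm
    set g : ℝ := 1 - ∑ w, (if G.Adj a w then c w else 0) with hg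
    have hcc : fval G c = fval G (Function.update c a 0) + (c a) * g := by
      rw [hc]; rw [fval_update G c a (c a)]
      rw [← hc]
    have h1c : fval G (Function.update c a 1) = fval G (Function.update c a 0) + 1 * g :=
      fval_update G c a 1
    have hout0 : ∀ v, v ∉ T → Function.update c a 0 v = 0 ∨ Function.update c a 0 v = 1 := by
      intro v hv
      by_cases hva : v = a
      · subst hva; left; simp
      · rw [Function.update_of_ne hva]
        exact hout v (by simp [hva, hv])
    have hout1 : ∀ v, v ∉ T → Function.update c a 1 v = 0 ∨ Function.update c a 1 v = 1 := by
      intro v hv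
      by_cases hva : v = a
      · subst hva; right; simp
      · rw [Function.update_of_ne hva]
        exact hout v (by simp [hva, hv])
    have hb0 : fval G (Function.update c a 0) ≤ indepNum V G := by
      apply ih
      · intro v; by_cases hva : v = a
        · subst hva; simp
        · rw [Function.update_of_ne hva]; exact h0 v
      · intro v; by_cases hva : v = a
        · subst hva; simp
        · rw [Function.update_of_ne hva]; exact h1 v
      · exact hout0
    have hb1 : fval G (Function.update c a 1) ≤ indepNum V G := by
      apply ih
      · intro v; by_cases hva : v = a
        · subst hva; simp
        · rw [Function.update_of_ne hva]; exact h0 v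
      · intro v; by_cases hva : v = a
        · subst hva; simp
        · rw [Function.update_of_ne hva]; exact h1 v
      · exact hout1
    rcases le_or_gt 0 g with hgpos | hgneg
    · have : (c a) * g ≤ 1 * g := mul_le_mul_of_nonneg_right (h1 a) hgpos
      linarith
    · have : (c a) * g ≤ 0 := mul_nonpos_of_nonneg_of_nonpos (h0 a) hgneg.le
      linarith
end frac

section bil
variable {U : Type*} [Fintype U] [DecidableEq U] (H : SimpleGraph U) [DecidableRel H.Adj]

noncomputable def Bl (q r : U → ℝ) : ℝ := ∑ u, ∑ w, if H.Adj u w then q u * r w else 0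

lemma sum_ite_adj (v : U) (t : ℝ) :
    ∑ w, (if H.Adj v w then t else 0) = (H.degree v : ℝ) * t := by
  rw [← Finset.sum_filter, Finset.sum_const, nsmul_eq_mul]
  congr 1
  rw [SimpleGraph.degree, SimpleGraph.neighborFinset_eq_filter]

lemma dot_eq_Bl (q r : U → ℝ) : q ⬝ᵥ (H.adjMatrix ℝ *ᵥ r) = Bl H q r := by
  unfold Bl
  simp only [dotProduct, Matrix.mulVec, SimpleGraph.adjMatrix_apply, Finset.mul_sum]
  apply Finset.sum_congr rfl
  intro u _
  apply Finset.sum_congr rfl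
  intro w _
  split_ifs <;> ring

lemma Bl_add_add (q s r t : U → ℝ) :
    Bl H (fun u => q u + s u) (fun u => r u + t u)
      = Bl H q r + Bl H q t + Bl H s r + Bl H s t := by
  unfold Bl
  rw [← Finset.sum_add_distrib, ← Finset.sum_add_distrib, ← Finset.sum_add_distrib]
  apply Finset.sum_congr rfl
  intro u _
  rw [← Finset.sum_add_distrib, ← Finset.sum_add_distrib, ← Finset.sum_add_distrib]
  apply Finset.sum_congr rfl
  intro w _
  split_ifs <;> ring

lemma Bl_sub_sub (q s r t : U → ℝ) :
    Bl H (fun u => q u - s u) (fun u => r u - t u)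
      = Bl H q r - Bl H q t - Bl H s r + Bl H s t := by
  unfold Bl
  rw [← Finset.sum_sub_distrib, ← Finset.sum_sub_distrib, ← Finset.sum_add_distrib]
  apply Finset.sum_congr rfl
  intro u _
  rw [← Finset.sum_sub_distrib, ← Finset.sum_sub_distrib, ← Finset.sum_add_distrib]
  apply Finset.sum_congr rfl
  intro w _
  split_ifs <;> ring

lemma Bl_const_right {d : ℕ} (hreg : H.IsRegularOfDegree d) (q : U → ℝ) (b : ℝ) :
    Bl H q (fun _ => b) = (d : ℝ) * b * ∑ u, q u := by
  unfold Bl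
  rw [Finset.mul_sum]
  apply Finset.sum_congr rfl
  intro u _
  have : ∀ w, (if H.Adj u w then q u * b else 0) = (if H.Adj u w then q u * b else 0) := fun _ => rfl
  rw [sum_ite_adj H u (q u * b), hreg u]
  ring

lemma Bl_const_left {d : ℕ} (hreg : H.IsRegularOfDegree d) (a : ℝ) (r : U → ℝ) :
    Bl H (fun _ => a) r = (d : ℝ) * a * ∑ u, r u := by
  unfold Bl
  rw [Finset.sum_comm, Finset.mul_sum]
  apply Finset.sum_congr rfl
  intro w _
  have h1 : ∀ u, (if H.Adj u w then a * r w else 0) = (if H.Adj w u then a * r w else 0) := by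
    intro u
    exact if_congr (H.adj_comm u w) rfl rfl
  rw [Finset.sum_congr rfl (fun u _ => h1 u), sum_ite_adj H w (a * r w), hreg w]
  ring

end bil

set_option maxHeartbeats 1000000 in
/-- Let `H` be a `d`-regular graph (`d ≥ 1`) on `N` vertices with spectral radius at most `ρ`
(i.e. `|pᵀ A_H p| ≤ ρ‖p‖²` for all `p` orthogonal to the all-ones vector), and let `G` have
maximum degree at most `Δ`.  Then `N · IS(G) ≥ (1 − ρΔ/(2d)) · IS(G ⊗ H)`. -/


theorem indepNum_tensorProd_le {V U : Type*} [Fintype V] [Fintype U] [DecidableEq V]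
    [DecidableEq U] (G : SimpleGraph V) [DecidableRel G.Adj]
    (H : SimpleGraph U) [DecidableRel H.Adj]
    (d : ℕ) (hd : 1 ≤ d) (hreg : H.IsRegularOfDegree d)
    (ρ : ℝ)
    (hspec : ∀ p : U → ℝ, ∑ i, p i = 0 →
      abs (p ⬝ᵥ (H.adjMatrix ℝ *ᵥ p)) ≤ ρ * ∑ i, (p i) ^ 2)
    (Δ : ℕ) (hΔ : ∀ v, G.degree v ≤ Δ) :
    (1 - ρ * Δ / (2 * d)) * (indepNum (V × U) (tensorProd G H) : ℝ)
      ≤ (Fintype.card U : ℝ) * (indepNum V G : ℝ) := by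
  classical
  by_cases hN : Fintype.card U = 0
  · haveI : IsEmpty U := Fintype.card_eq_zero_iff.mp hN
    have hzero : indepNum (V × U) (tensorProd G H) = 0 := by
      have hset : {k | ∃ I : Finset (V × U), IsIndepSet (tensorProd G H) I ∧ I.card = k}
          = {0} := by
        ext k
        constructor
        · rintro ⟨I, -, rfl⟩
          simp [Finset.eq_empty_of_isEmpty I]
        · rintro rfl
          exact ⟨∅, fun u hu => by simp at hu, by simp⟩
      rw [indepNum, hset, csSup_singleton]
    rw [hzero, hN]
    simp
  · have hNpos : 0 < Fintype.card U := Nat.pos_of_ne_zero hN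
    haveI : DecidableRel (tensorProd G H).Adj := fun a b => instDecidableAnd
    set N : ℕ := Fintype.card U with hNdef
    have hNR : (0:ℝ) < N := by exact_mod_cast hNpos
    have hNne : (N:ℝ) ≠ 0 := hNR.ne'
    have hdR : (0:ℝ) < d := by exact_mod_cast hd
    -- ρ is nonnegative
    have hρ : 0 ≤ ρ := by
      obtain ⟨u0⟩ := Fintype.card_pos_iff.mp hNpos
      have hdeg : 0 < (H.neighborFinset u0).card := by
        rw [H.card_neighborFinset_eq_degree, hreg u0]; exact hd
      obtain ⟨u1, hu1⟩ := Finset.card_pos.mp hdeg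
      have hadj : H.Adj u0 u1 := (SimpleGraph.mem_neighborFinset H u0 u1).mp hu1
      have hne : u0 ≠ u1 := H.ne_of_adj hadj
      set p0 : U → ℝ := fun t => (if t = u0 then 1 else 0) - (if t = u1 then 1 else 0)
        with hp0
      have hsum0 : ∑ i, p0 i = 0 := by
        simp only [hp0, Finset.sum_sub_distrib]
        simp
      have hsq : ∑ i, (p0 i) ^ 2 = 2 := by
        have hterm : ∀ t, (p0 t) ^ 2
            = (if t = u0 then (1:ℝ) else 0) + (if t = u1 then 1 else 0) := by
          intro t
          by_cases h0 : t = u0 <;> by_cases h1 : t = u1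
          · exact absurd (h0 ▸ h1 ▸ rfl : u0 = u1) hne
          · simp [hp0, h0, h1, hne, Ne.symm hne]
          · simp [hp0, h0, h1, hne, Ne.symm hne]
          · simp [hp0, h0, h1, hne, Ne.symm hne]
        rw [Finset.sum_congr rfl (fun t _ => hterm t), Finset.sum_add_distrib]
        simp
        norm_num
      have hsp := hspec p0 hsum0
      rw [hsq] at hsp
      have habs : (0:ℝ) ≤ |p0 ⬝ᵥ (H.adjMatrix ℝ *ᵥ p0)| := abs_nonneg _
      linarith
    -- a maximum independent set of the tensor product
    obtain ⟨I, hI, hIcard⟩ := exists_max_indep (tensorProd G H)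
    -- fiber sizes
    set s : V → ℕ := fun v => (univ.filter fun u => (v, u) ∈ I).card with hs
    set c : V → ℝ := fun v => (s v : ℝ) / N with hc
    have hsle : ∀ v, s v ≤ N := by
      intro v
      rw [hNdef]
      simp only [hs]
      exact le_trans (Finset.card_filter_le _ _) (le_of_eq Finset.card_univ)
    have hc0 : ∀ v, 0 ≤ c v := by
      intro v
      simp only [hc]
      positivity
    have hc1 : ∀ v, c v ≤ 1 := by
      intro v
      simp only [hc]
      rw [div_le_one hNR]
      exact_mod_cast hsle v
    have hNc : ∀ v, (N : ℝ) * c v = s v := by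
      intro v
      simp only [hc]
      field_simp
    -- total count
    have htot : ∑ v, s v = I.card := by
      rw [Finset.card_eq_sum_card_fiberwise (f := Prod.fst) (t := univ)
        (fun x _ => Finset.mem_univ x.1)]
      apply Finset.sum_congr rfl
      intro v _
      simp only [hs]
      apply Finset.card_nbij' (fun u => (v, u)) (fun x => x.2)
      · intro u hu
        simp only [Finset.mem_coe, Finset.mem_filter] at hu ⊢
        exact ⟨hu.2, trivial⟩
      · intro x hx
        simp only [Finset.mem_coe, Finset.mem_filter] at hx ⊢
        refine ⟨Finset.mem_univ _, ?_⟩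
        rw [← hx.2]
        exact hx.1
      · intro u hu
        rfl
      · intro x hx
        simp only [Finset.mem_coe, Finset.mem_filter] at hx
        rw [← hx.2]
    -- indicator vectors and centered vectors
    set x : V → U → ℝ := fun v u => if (v, u) ∈ I then 1 else 0 with hx
    set p : V → U → ℝ := fun v u => x v u - c v with hp
    have hxsum : ∀ v, ∑ u, x v u = (s v : ℝ) := by
      intro v
      simp only [hx, hs]
      simp [Finset.sum_boole]
    have hpsum : ∀ v, ∑ u, p v u = 0 := by
      intro v
      simp only [hp]
      rw [Finset.sum_sub_distrib, hxsum v, Finset.sum_const, Finset.card_univ, nsmul_eq_mul,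
        ← hNdef, hNc v]
      ring
    have hpsq : ∀ v, ∑ u, (p v u) ^ 2 ≤ (s v : ℝ) := by
      intro v
      have hterm : ∀ u, (p v u) ^ 2 = x v u - 2 * c v * x v u + c v ^ 2 := by
        intro u
        have hxx : (x v u) ^ 2 = x v u := by
          simp only [hx]
          split_ifs <;> norm_num
        simp only [hp]
        linear_combination hxx
      rw [Finset.sum_congr rfl (fun u _ => hterm u), Finset.sum_add_distrib,
        Finset.sum_sub_distrib, ← Finset.mul_sum, hxsum v, Finset.sum_const,
        Finset.card_univ, nsmul_eq_mul, ← hNdef]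
      have h2 : (N:ℝ) * c v ^ 2 = (s v : ℝ) * c v := by
        rw [pow_two, ← mul_assoc, hNc v]
      rw [h2]
      have hcs : 0 ≤ (s v : ℝ) * c v := mul_nonneg (Nat.cast_nonneg _) (hc0 v)
      nlinarith [mul_nonneg (Nat.cast_nonneg (s v) : (0:ℝ) ≤ s v) (hc0 v), hc1 v,
        (Nat.cast_nonneg (s v) : (0:ℝ) ≤ s v)]
    -- the bilinear form vanishes on indicator vectors of adjacent fibers
    have hBlx : ∀ v1 v2, G.Adj v1 v2 → Bl H (x v1) (x v2) = 0 := by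
      intro v1 v2 h12
      apply Finset.sum_eq_zero
      intro u _
      apply Finset.sum_eq_zero
      intro w' _
      by_cases hAdj : H.Adj u w'
      · rw [if_pos hAdj]
        by_cases h1 : (v1, u) ∈ I
        · by_cases h2 : (v2, w') ∈ I
          · exact absurd (And.intro h12 hAdj) (hI _ h1 _ h2)
          · simp only [hx]
            rw [if_neg h2]
            ring
        · simp only [hx]
          rw [if_neg h1]
          ring
      · rw [if_neg hAdj]
    -- decomposition of the bilinear form
    have hdecomp : ∀ v1 v2, G.Adj v1 v2 →
        Bl H (p v1) (p v2) = -(c v1 * c v2 * (d * N)) := by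
      intro v1 v2 h12
      have h0 : Bl H (x v1) (x v2) = 0 := hBlx v1 v2 h12
      have hrw : Bl H (x v1) (x v2)
          = Bl H (fun u => p v1 u + (fun _ : U => c v1) u)
              (fun u => p v2 u + (fun _ : U => c v2) u) := by
        congr 1 <;> funext u <;> simp [hp]
      rw [hrw, Bl_add_add] at h0
      rw [Bl_const_right H hreg (p v1) (c v2), Bl_const_left H hreg (c v1) (p v2),
        Bl_const_right H hreg (fun _ => c v1) (c v2), hpsum v1, hpsum v2,
        Finset.sum_const, Finset.card_univ, nsmul_eq_mul, ← hNdef] at h0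
      linear_combination h0
    -- key pairwise inequality
    have hpair : ∀ v w, G.Adj v w → c v * c w ≤ ρ * (c v + c w) / (2 * d) := by
      intro v w hvw
      have hPQ := hdecomp v w hvw
      have hQP := hdecomp w v hvw.symm
      have hsumP : ∑ u, (fun u => p v u + p w u) u = 0 := by
        simp only
        rw [Finset.sum_add_distrib, hpsum v, hpsum w]
        ring
      have hsumM : ∑ u, (fun u => p v u - p w u) u = 0 := by
        simp only
        rw [Finset.sum_sub_distrib, hpsum v, hpsum w]
        ring
      have hplus := hspec (fun u => p v u + p w u) hsumP
      have hminus := hspec (fun u => p v u - p w u) hsumM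
      rw [dot_eq_Bl, Bl_add_add] at hplus
      rw [dot_eq_Bl, Bl_sub_sub] at hminus
      rw [hPQ, hQP] at hplus hminus
      -- sums of squares
      have hsq2 : ∑ u, ((fun u => p v u + p w u) u) ^ 2
            + ∑ u, ((fun u => p v u - p w u) u) ^ 2
          = 2 * ∑ u, (p v u) ^ 2 + 2 * ∑ u, (p w u) ^ 2 := by
        simp only
        rw [Finset.mul_sum, Finset.mul_sum, ← Finset.sum_add_distrib,
          ← Finset.sum_add_distrib]
        apply Finset.sum_congr rfl
        intro u _
        ring
      set Bvv := Bl H (p v) (p v) with hBvv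
      set Bww := Bl H (p w) (p w) with hBww
      set Sp := ∑ u, ((fun u => p v u + p w u) u) ^ 2 with hSp
      set Sm := ∑ u, ((fun u => p v u - p w u) u) ^ 2 with hSm
      have habs1 : -(Bvv + -(c v * c w * (d * N)) + -(c w * c v * (d * N)) + Bww) ≤ ρ * Sp := by
        exact le_trans (neg_le_abs _) hplus
      have habs2 : Bvv - -(c v * c w * (d * N)) - -(c w * c v * (d * N)) + Bww
          ≤ ρ * Sm := by
        exact le_trans (le_abs_self _) hminus
      have hSbound : Sp + Sm ≤ 2 * ((N:ℝ) * c v) + 2 * ((N:ℝ) * c w) := by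
        rw [hsq2]
        have h1 := hpsq v
        have h2 := hpsq w
        rw [← hNc v] at h1
        rw [← hNc w] at h2
        linarith
      have hmul : ρ * (Sp + Sm) ≤ ρ * (2 * ((N:ℝ) * c v) + 2 * ((N:ℝ) * c w)) :=
        mul_le_mul_of_nonneg_left hSbound hρ
      have key : 4 * (c v * c w * ((d:ℝ) * N)) ≤ 2 * ρ * ((N:ℝ) * c v + (N:ℝ) * c w) := by
        nlinarith [habs1, habs2, hmul]
      rw [le_div_iff₀ (by positivity : (0:ℝ) < 2 * d)]
      refine le_of_mul_le_mul_right ?_ hNR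
      nlinarith [key]
    -- bound the quadratic term
    have hrowG : ∀ (v : V) (t : ℝ), ∑ w, (if G.Adj v w then t else 0) = (G.degree v : ℝ) * t :=
      fun v t => sum_ite_adj G v t
    have hA : ∑ v, ∑ w, (if G.Adj v w then ρ * c v / (2 * d) else 0)
        ≤ ρ * Δ / (2 * d) * ∑ v, c v := by
      rw [Finset.mul_sum]
      apply Finset.sum_le_sum
      intro v _
      rw [hrowG v]
      have hdv : (G.degree v : ℝ) ≤ Δ := by exact_mod_cast hΔ v
      have hnn : 0 ≤ ρ * c v / (2 * d) := by positivity
      calc (G.degree v : ℝ) * (ρ * c v / (2 * d))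
          ≤ Δ * (ρ * c v / (2 * d)) := mul_le_mul_of_nonneg_right hdv hnn
        _ = ρ * Δ / (2 * d) * c v := by ring
    have hB : ∑ v, ∑ w, (if G.Adj v w then ρ * c w / (2 * d) else 0)
        ≤ ρ * Δ / (2 * d) * ∑ v, c v := by
      rw [Finset.sum_comm]
      have hswap : ∀ w : V, ∑ v, (if G.Adj v w then ρ * c w / (2 * d) else 0)
          = (G.degree w : ℝ) * (ρ * c w / (2 * d)) := by
        intro w
        rw [Finset.sum_congr rfl (fun v _ => if_congr (G.adj_comm v w) rfl rfl), hrowG w]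
      rw [Finset.sum_congr rfl (fun w _ => hswap w), Finset.mul_sum]
      apply Finset.sum_le_sum
      intro w _
      have hdv : (G.degree w : ℝ) ≤ Δ := by exact_mod_cast hΔ w
      have hnn : 0 ≤ ρ * c w / (2 * d) := by positivity
      calc (G.degree w : ℝ) * (ρ * c w / (2 * d))
          ≤ Δ * (ρ * c w / (2 * d)) := mul_le_mul_of_nonneg_right hdv hnn
        _ = ρ * Δ / (2 * d) * c w := by ring
    have hQ : ∑ v, ∑ w, (if G.Adj v w then c v * c w else 0)
        ≤ ρ * ↑Δ / ↑d * ∑ v, c v := by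
      have hstep : ∑ v, ∑ w, (if G.Adj v w then c v * c w else 0)
          ≤ ∑ v, ∑ w, ((if G.Adj v w then ρ * c v / (2 * d) else 0)
            + (if G.Adj v w then ρ * c w / (2 * d) else 0)) := by
        apply Finset.sum_le_sum
        intro v _
        apply Finset.sum_le_sum
        intro w _
        by_cases hadj : G.Adj v w
        · simp only [if_pos hadj]
          have h1 := hpair v w hadj
          have h2 : ρ * (c v + c w) / (2 * d) = ρ * c v / (2 * d) + ρ * c w / (2 * d) := by
            ring
          linarith
        · simp [hadj]
      have hsplit : ∑ v, ∑ w, ((if G.Adj v w then ρ * c v / (2 * d) else 0)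
            + (if G.Adj v w then ρ * c w / (2 * d) else 0))
          = ∑ v, ∑ w, (if G.Adj v w then ρ * c v / (2 * d) else 0)
            + ∑ v, ∑ w, (if G.Adj v w then ρ * c w / (2 * d) else 0) := by
        simp only [Finset.sum_add_distrib]
      have hfin : ρ * ↑Δ / (2 * ↑d) * ∑ v, c v + ρ * ↑Δ / (2 * ↑d) * ∑ v, c v
          = ρ * ↑Δ / ↑d * ∑ v, c v := by
        ring
      linarith [hstep, hA, hB, hsplit.le, hsplit.ge]
    -- fractional relaxation bound
    have hfval := fval_le G c hc0 hc1
    rw [fval] at hfval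
    have hmain : (1 - ρ * ↑Δ / (2 * ↑d)) * ∑ v, c v ≤ (indepNum V G : ℝ) := by
      have hhalf : ρ * ↑Δ / ↑d * ∑ v, c v = 2 * (ρ * ↑Δ / (2 * ↑d) * ∑ v, c v) := by ring
      have hexp : (1 - ρ * ↑Δ / (2 * ↑d)) * ∑ v, c v
          = ∑ v, c v - ρ * ↑Δ / (2 * ↑d) * ∑ v, c v := by ring
      linarith [hQ, hfval]
    -- conclude
    rw [← hIcard]
    have hIc : (I.card : ℝ) = (N : ℝ) * ∑ v, c v := by
      rw [← htot, Nat.cast_sum, Finset.mul_sum]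
      exact Finset.sum_congr rfl (fun v _ => (hNc v).symm)
    rw [hIc]
    calc (1 - ρ * ↑Δ / (2 * ↑d)) * ((N : ℝ) * ∑ v, c v)
        = (N : ℝ) * ((1 - ρ * ↑Δ / (2 * ↑d)) * ∑ v, c v) := by ring
      _ ≤ (N : ℝ) * (indepNum V G : ℝ) :=
        mul_le_mul_of_nonneg_left hmain (le_of_lt hNR)
end

section
/- Let G be a finite simple graph with maximum degree at most Δ and adjacency matrix A, and let H be a finite simple d-regular graph (d ≥ 1) on N vertices with adjacency matrix A_H satisfying |pᵀ A_H p| ≤ ρ·‖p‖² for every p ∈ ℝ^N orthogonal to the all-ones vector. Let B = (1/d)·A_H and let J̃_N be the N×N matrix all of whose entries equal 1/N. Then for every vector f ∈ ℝ^{n×N}: | fᵀ (A ⊗ (B − J̃_N)) f | ≤ (Δρ/d)·‖f‖². -/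
open Matrix Kronecker


lemma dot_expand {n : Type*} [Fintype n] (A : Matrix n n ℝ) (g h : n → ℝ) :
    g ⬝ᵥ (A *ᵥ h) = ∑ i, ∑ j, g i * A i j * h j := by
  simp [dotProduct, mulVec, Finset.mul_sum, mul_assoc]

lemma adjMatrix_symm_entry {U : Type*} (H : SimpleGraph U) [DecidableRel H.Adj] (i j : U) :
    H.adjMatrix ℝ i j = H.adjMatrix ℝ j i := by
  conv_rhs => rw [← Matrix.transpose_apply (H.adjMatrix ℝ) i j, SimpleGraph.transpose_adjMatrix]

lemma bilin_symm {U : Type*} [Fintype U] (H : SimpleGraph U) [DecidableRel H.Adj]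
    (g h : U → ℝ) : g ⬝ᵥ (H.adjMatrix ℝ *ᵥ h) = h ⬝ᵥ (H.adjMatrix ℝ *ᵥ g) := by
  rw [dot_expand, dot_expand, Finset.sum_comm]
  refine Finset.sum_congr rfl fun j _ => Finset.sum_congr rfl fun i _ => ?_
  rw [adjMatrix_symm_entry]; ring

lemma bilin_bound {U : Type*} [Fintype U] (H : SimpleGraph U) [DecidableRel H.Adj]
    (ρ : ℝ)
    (hspec : ∀ p : U → ℝ, ∑ i, p i = 0 →
      |p ⬝ᵥ (H.adjMatrix ℝ *ᵥ p)| ≤ ρ * ∑ i, (p i) ^ 2)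
    (g h : U → ℝ) (hg : ∑ i, g i = 0) (hh : ∑ i, h i = 0) :
    |g ⬝ᵥ (H.adjMatrix ℝ *ᵥ h)| ≤ ρ / 2 * (∑ i, g i ^ 2 + ∑ i, h i ^ 2) := by
  set A := H.adjMatrix ℝ with hA
  have key : g ⬝ᵥ (A *ᵥ h)
      = ((g + h) ⬝ᵥ (A *ᵥ (g + h)) - (g - h) ⬝ᵥ (A *ᵥ (g - h))) / 4 := by
    have hs := bilin_symm H g h
    simp only [Matrix.mulVec_add, Matrix.mulVec_sub, dotProduct_add,
      dotProduct_sub, add_dotProduct, sub_dotProduct]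
    rw [← hA] at hs
    rw [← hs]; ring
  have h1 := hspec (g + h) (by simp [Finset.sum_add_distrib, hg, hh])
  have h2 := hspec (g - h) (by simp [Finset.sum_sub_distrib, hg, hh])
  have hpar : ∑ i, ((g + h) i) ^ 2 + ∑ i, ((g - h) i) ^ 2
      = 2 * (∑ i, g i ^ 2 + ∑ i, h i ^ 2) := by
    simp only [Pi.add_apply, Pi.sub_apply]
    rw [← Finset.sum_add_distrib, mul_add, Finset.mul_sum, Finset.mul_sum,
      ← Finset.sum_add_distrib]
    exact Finset.sum_congr rfl fun i _ => by ring
  have habs := abs_sub ((g + h) ⬝ᵥ (A *ᵥ (g + h))) ((g - h) ⬝ᵥ (A *ᵥ (g - h)))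
  rw [key, abs_div, show |(4:ℝ)| = 4 from by norm_num]
  have h3 : ρ / 2 * (∑ i, g i ^ 2 + ∑ i, h i ^ 2)
      = (ρ * ∑ i, ((g + h) i) ^ 2 + ρ * ∑ i, ((g - h) i) ^ 2) / 4 := by
    rw [← mul_add, hpar]; ring
  rw [h3]
  linarith


/-- Let `G` have maximum degree at most `Δ` and adjacency matrix `A`, and let `H` be a
`d`-regular graph (`d ≥ 1`) on `N` vertices whose adjacency matrix `A_H` satisfies
`|pᵀ A_H p| ≤ ρ‖p‖²` for every `p` orthogonal to the all-ones vector.  With `B = (1/d)·A_H`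
and `J̃_N` the `N×N` matrix of all `1/N`s, every `f ∈ ℝ^{n×N}` satisfies
`|fᵀ (A ⊗ (B − J̃_N)) f| ≤ (Δρ/d)·‖f‖²`. -/
theorem quadForm_kronecker_bound {V U : Type*} [Fintype V] [Fintype U]
    (G : SimpleGraph V) [DecidableRel G.Adj]
    (H : SimpleGraph U) [DecidableRel H.Adj]
    (Δ d : ℕ) (hd : 1 ≤ d) (hΔ : ∀ v, G.degree v ≤ Δ)
    (hreg : H.IsRegularOfDegree d) (ρ : ℝ)
    (hspec : ∀ p : U → ℝ, ∑ i, p i = 0 →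
      abs (p ⬝ᵥ (H.adjMatrix ℝ *ᵥ p)) ≤ ρ * ∑ i, (p i) ^ 2)
    (f : V × U → ℝ) :
    abs (f ⬝ᵥ (((G.adjMatrix ℝ) ⊗ₖ
        ((d : ℝ)⁻¹ • H.adjMatrix ℝ
          - Matrix.of fun _ _ : U => (Fintype.card U : ℝ)⁻¹)) *ᵥ f))
      ≤ ((Δ : ℝ) * ρ / d) * ∑ x : V × U, (f x) ^ 2 := by
  classical
  rcases isEmpty_or_nonempty U with hU | hU
  · have : IsEmpty (V × U) := ⟨fun x => hU.false x.2⟩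
    simp [dotProduct]
  -- main case
  set A := G.adjMatrix ℝ with hAdef
  set B := H.adjMatrix ℝ with hBdef
  set Nr : ℝ := (Fintype.card U : ℝ) with hNrdef
  set M : Matrix U U ℝ := (d : ℝ)⁻¹ • B - Matrix.of fun _ _ : U => Nr⁻¹ with hMdef
  have hd0 : (0 : ℝ) < d := by exact_mod_cast hd
  have hN : (0 : ℝ) < Nr := by
    rw [hNrdef]; exact_mod_cast Fintype.card_pos
  -- row/column sums of B
  have hBrow : ∀ i, ∑ j, B i j = (d : ℝ) := by
    intro i
    have : ∑ j, B i j = (H.degree i : ℝ) := by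
      simp [hBdef, SimpleGraph.adjMatrix_apply, SimpleGraph.degree, SimpleGraph.neighborFinset]
    rw [this, hreg i]
  have hBcol : ∀ j, ∑ i, B i j = (d : ℝ) := by
    intro j
    have : ∀ i, B i j = B j i := fun i => by rw [hBdef]; exact adjMatrix_symm_entry H i j
    rw [Finset.sum_congr rfl fun i _ => this i]
    exact hBrow j
  -- row/column sums of M are zero
  have hMrow : ∀ i, ∑ j, M i j = 0 := by
    intro i
    have : ∑ j, M i j = (d : ℝ)⁻¹ * ∑ j, B i j - Nr * Nr⁻¹ := by
      simp [hMdef, Matrix.sub_apply, Finset.sum_sub_distrib, Finset.mul_sum, hNrdef,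
        Finset.sum_const, nsmul_eq_mul]
    rw [this, hBrow, inv_mul_cancel₀ (ne_of_gt hd0), mul_inv_cancel₀ (ne_of_gt hN), sub_self]
  have hMcol : ∀ j, ∑ i, M i j = 0 := by
    intro j
    have : ∑ i, M i j = (d : ℝ)⁻¹ * ∑ i, B i j - Nr * Nr⁻¹ := by
      simp [hMdef, Matrix.sub_apply, Finset.sum_sub_distrib, Finset.mul_sum, hNrdef,
        Finset.sum_const, nsmul_eq_mul]
    rw [this, hBcol, inv_mul_cancel₀ (ne_of_gt hd0), mul_inv_cancel₀ (ne_of_gt hN), sub_self]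
  -- centered vectors
  set c : V → ℝ := fun v => (∑ j, f (v, j)) / Nr with hcdef
  set p : V → U → ℝ := fun v i => f (v, i) - c v with hpdef
  have hp : ∀ v i, p v i = f (v, i) - c v := fun _ _ => rfl
  have hfc : ∀ v, ∑ i, f (v, i) = Nr * c v := by
    intro v
    rw [hcdef]
    field_simp
  have hpsum : ∀ v, ∑ i, p v i = 0 := by
    intro v
    have : ∑ i, p v i = (∑ i, f (v, i)) - Nr * c v := by
      simp [hp, Finset.sum_sub_distrib, Finset.sum_const, nsmul_eq_mul, hNrdef]
    rw [this, hfc, sub_self]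
  have hpsq : ∀ v, ∑ i, p v i ^ 2 ≤ ∑ i, f (v, i) ^ 2 := by
    intro v
    have hexp : ∑ i, p v i ^ 2
        = ∑ i, f (v, i) ^ 2 - 2 * c v * ∑ i, f (v, i) + Nr * c v ^ 2 := by
      have h1 : ∀ i, p v i ^ 2 = f (v, i) ^ 2 - 2 * c v * f (v, i) + c v ^ 2 := by
        intro i; rw [hp]; ring
      rw [Finset.sum_congr rfl fun i _ => h1 i]
      rw [Finset.sum_add_distrib, Finset.sum_sub_distrib, ← Finset.mul_sum,
        Finset.sum_const, nsmul_eq_mul, Finset.card_univ, hNrdef]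
    rw [hexp, hfc]
    nlinarith [sq_nonneg (c v), hN]
  -- ρ is nonnegative
  have hρ : 0 ≤ ρ := by
    obtain ⟨u⟩ := hU
    have hdeg : 0 < H.degree u := by rw [hreg u]; omega
    obtain ⟨w, hw⟩ := H.degree_pos_iff_exists_adj u |>.mp hdeg
    have hne : u ≠ w := H.ne_of_adj hw
    set q : U → ℝ := fun i => (if i = u then (1 : ℝ) else 0) - (if i = w then 1 else 0)
      with hqdef
    have hqsum : ∑ i, q i = 0 := by
      simp [hqdef, Finset.sum_sub_distrib]
    have hqsq : ∑ i, q i ^ 2 = 2 := by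
      have h1 : ∀ i, q i ^ 2 = (if i = u then (1 : ℝ) else 0) + (if i = w then 1 else 0) := by
        intro i
        by_cases h1 : i = u <;> by_cases h2 : i = w
        · exact absurd ((h2.symm.trans h1).symm) hne
        · simp [hqdef, h1, h2, hne, Ne.symm hne]
        · simp [hqdef, h1, h2, hne, Ne.symm hne]
        · simp [hqdef, h1, h2]
      rw [Finset.sum_congr rfl fun i _ => h1 i, Finset.sum_add_distrib]
      simp
      norm_num
    have := hspec q hqsum
    rw [hqsq] at this
    nlinarith [abs_nonneg (q ⬝ᵥ (H.adjMatrix ℝ *ᵥ q))]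
  -- expansion of the quadratic form
  have expand : f ⬝ᵥ ((A ⊗ₖ M) *ᵥ f)
      = ∑ v, ∑ w, A v w * ∑ i, ∑ j, f (v, i) * M i j * f (w, j) := by
    rw [dot_expand]
    simp only [Fintype.sum_prod_type, kroneckerMap_apply, Finset.mul_sum]
    refine Finset.sum_congr rfl fun v _ => ?_
    rw [Finset.sum_comm]
    exact Finset.sum_congr rfl fun w _ => Finset.sum_congr rfl fun i _ =>
      Finset.sum_congr rfl fun j _ => by ring
  -- key identity per pair of vertices
  have key1 : ∀ v w, ∑ i, ∑ j, f (v, i) * M i j * f (w, j)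
      = (d : ℝ)⁻¹ * (p v ⬝ᵥ (B *ᵥ p w)) := by
    intro v w
    have stepA : ∀ i, ∑ j, f (v, i) * M i j * f (w, j) = ∑ j, f (v, i) * M i j * p w j := by
      intro i
      have hsub : ∑ j, f (v, i) * M i j * f (w, j) - ∑ j, f (v, i) * M i j * p w j
          = f (v, i) * c w * ∑ j, M i j := by
        rw [← Finset.sum_sub_distrib, Finset.mul_sum]
        refine Finset.sum_congr rfl fun j _ => ?_
        rw [hp]; ring
      rw [hMrow i, mul_zero] at hsub
      linarith
    have stepB : ∑ i, ∑ j, f (v, i) * M i j * p w j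
        = ∑ i, ∑ j, p v i * M i j * p w j := by
      rw [Finset.sum_comm]
      conv_rhs => rw [Finset.sum_comm]
      refine Finset.sum_congr rfl fun j _ => ?_
      have hsub : ∑ i, f (v, i) * M i j * p w j - ∑ i, p v i * M i j * p w j
          = c v * p w j * ∑ i, M i j := by
        rw [← Finset.sum_sub_distrib, Finset.mul_sum]
        refine Finset.sum_congr rfl fun i _ => ?_
        rw [hp]; ring
      rw [hMcol j, mul_zero] at hsub
      linarith
    have stepC : ∀ i, ∑ j, p v i * M i j * p w j
        = ∑ j, (d : ℝ)⁻¹ * (p v i * B i j * p w j) := by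
      intro i
      have hsub : ∑ j, p v i * M i j * p w j - ∑ j, (d : ℝ)⁻¹ * (p v i * B i j * p w j)
          = -(Nr⁻¹ * p v i * ∑ j, p w j) := by
        rw [← Finset.sum_sub_distrib, Finset.mul_sum, ← Finset.sum_neg_distrib]
        refine Finset.sum_congr rfl fun j _ => ?_
        simp only [hMdef, Matrix.sub_apply, Matrix.smul_apply, Matrix.of_apply, smul_eq_mul]
        ring
      rw [hpsum w, mul_zero, neg_zero] at hsub
      linarith
    calc ∑ i, ∑ j, f (v, i) * M i j * f (w, j)
        = ∑ i, ∑ j, f (v, i) * M i j * p w j := Finset.sum_congr rfl fun i _ => stepA i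
      _ = ∑ i, ∑ j, p v i * M i j * p w j := stepB
      _ = ∑ i, ∑ j, (d : ℝ)⁻¹ * (p v i * B i j * p w j) :=
          Finset.sum_congr rfl fun i _ => stepC i
      _ = (d : ℝ)⁻¹ * (p v ⬝ᵥ (B *ᵥ p w)) := by
          rw [dot_expand]; simp only [Finset.mul_sum]
  -- put it together
  set S : V → ℝ := fun v => ∑ i, p v i ^ 2 with hSdef
  have hS : ∀ v, S v = ∑ i, p v i ^ 2 := fun _ => rfl
  have hS0 : ∀ v, 0 ≤ S v := fun v => Finset.sum_nonneg fun i _ => sq_nonneg _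
  have hA0 : ∀ v w, 0 ≤ A v w := by
    intro v w
    rw [hAdef, SimpleGraph.adjMatrix_apply]
    split_ifs <;> norm_num
  have hArow : ∀ v, ∑ w, A v w = (G.degree v : ℝ) := by
    intro v
    simp [hAdef, SimpleGraph.adjMatrix_apply, SimpleGraph.degree, SimpleGraph.neighborFinset]
  have hAcol : ∀ w, ∑ v, A v w = (G.degree w : ℝ) := by
    intro w
    have : ∀ v, A v w = A w v := fun v => by rw [hAdef]; exact adjMatrix_symm_entry G v w
    rw [Finset.sum_congr rfl fun v _ => this v]
    exact hArow w
  have hbil : ∀ v w, |p v ⬝ᵥ (B *ᵥ p w)| ≤ ρ / 2 * (S v + S w) := by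
    intro v w
    have := bilin_bound H ρ hspec (p v) (p w) (hpsum v) (hpsum w)
    rw [← hBdef] at this
    rw [hS, hS]
    exact this
  have main : |f ⬝ᵥ ((A ⊗ₖ M) *ᵥ f)|
      ≤ ∑ v, ∑ w, A v w * ((d : ℝ)⁻¹ * (ρ / 2 * (S v + S w))) := by
    rw [expand]
    calc |∑ v, ∑ w, A v w * ∑ i, ∑ j, f (v, i) * M i j * f (w, j)|
        ≤ ∑ v, |∑ w, A v w * ∑ i, ∑ j, f (v, i) * M i j * f (w, j)| :=
          Finset.abs_sum_le_sum_abs _ _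
      _ ≤ ∑ v, ∑ w, |A v w * ∑ i, ∑ j, f (v, i) * M i j * f (w, j)| :=
          Finset.sum_le_sum fun v _ => Finset.abs_sum_le_sum_abs _ _
      _ ≤ ∑ v, ∑ w, A v w * ((d : ℝ)⁻¹ * (ρ / 2 * (S v + S w))) := by
          refine Finset.sum_le_sum fun v _ => Finset.sum_le_sum fun w _ => ?_
          rw [key1, abs_mul, abs_mul, abs_of_nonneg (hA0 v w),
            abs_of_nonneg (inv_nonneg.mpr hd0.le)]
          refine mul_le_mul_of_nonneg_left ?_ (hA0 v w)
          exact mul_le_mul_of_nonneg_left (hbil v w) (inv_nonneg.mpr hd0.le)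
  have hsplit : ∑ v, ∑ w, A v w * ((d : ℝ)⁻¹ * (ρ / 2 * (S v + S w)))
      = (d : ℝ)⁻¹ * (ρ / 2) * ((∑ v, ∑ w, A v w * S v) + ∑ v, ∑ w, A v w * S w) := by
    rw [mul_add, Finset.mul_sum, Finset.mul_sum, ← Finset.sum_add_distrib]
    refine Finset.sum_congr rfl fun v _ => ?_
    rw [Finset.mul_sum, Finset.mul_sum, ← Finset.sum_add_distrib]
    exact Finset.sum_congr rfl fun w _ => by ring
  have hT1 : (∑ v, ∑ w, A v w * S v) ≤ (Δ : ℝ) * ∑ v, S v := by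
    rw [Finset.mul_sum]
    refine Finset.sum_le_sum fun v _ => ?_
    rw [← Finset.sum_mul, hArow]
    calc (G.degree v : ℝ) * S v ≤ (Δ : ℝ) * S v := by
          exact mul_le_mul_of_nonneg_right (by exact_mod_cast hΔ v) (hS0 v)
      _ = (Δ : ℝ) * S v := rfl
  have hT2 : (∑ v, ∑ w, A v w * S w) ≤ (Δ : ℝ) * ∑ v, S v := by
    rw [Finset.sum_comm, Finset.mul_sum]
    refine Finset.sum_le_sum fun w _ => ?_
    rw [← Finset.sum_mul, hAcol]
    exact mul_le_mul_of_nonneg_right (by exact_mod_cast hΔ w) (hS0 w)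
  have hSf : ∑ v, S v ≤ ∑ x : V × U, (f x) ^ 2 := by
    rw [Fintype.sum_prod_type]
    exact Finset.sum_le_sum fun v _ => hpsq v
  calc |f ⬝ᵥ ((A ⊗ₖ M) *ᵥ f)|
      ≤ ∑ v, ∑ w, A v w * ((d : ℝ)⁻¹ * (ρ / 2 * (S v + S w))) := main
    _ = (d : ℝ)⁻¹ * (ρ / 2) * ((∑ v, ∑ w, A v w * S v) + ∑ v, ∑ w, A v w * S w) := hsplit
    _ ≤ (d : ℝ)⁻¹ * (ρ / 2) * ((Δ : ℝ) * ∑ v, S v + (Δ : ℝ) * ∑ v, S v) := by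
        refine mul_le_mul_of_nonneg_left (add_le_add hT1 hT2) ?_
        positivity
    _ = ((Δ : ℝ) * ρ / d) * ∑ v, S v := by field_simp; ring
    _ ≤ ((Δ : ℝ) * ρ / d) * ∑ x : V × U, (f x) ^ 2 := by
        refine mul_le_mul_of_nonneg_left hSf ?_
        positivity
end
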